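/- arXiv:1110.4900 — 6 statements merged into one kernel-verified Lean document; each statement's English description precedes it below -/
import Mathlib

section
/- Let G be a finite simple graph, let L be a list-assignment for G with |L(v)| = 3 for every vertex v, and let v_1, …, v_k be distinct vertices of G. For i = 0, …, k let G_i denote the induced subgraph G − {v_{i+1}, …, v_k} (so G_k = G and G_0 = G − {v_1, …, v_k}). If for every i = 1, …, k the degree of v_i in G_i is at most 5, then every arboreal L-coloring of G_0 can be extended to an arboreal L-coloring of G. -/
/-- `ArbColOn G s f` : the coloring `f` is arboreal on the vertex set `s`,
i.e. for every color `c`, the subgraph of `G` induced on the vertices of `s`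
colored `c` is acyclic (a forest). -/
def ArbColOn {V : Type*} {α : Type*} (G : SimpleGraph V) (s : Set V) (f : V → α) : Prop :=
  ∀ c : α, (G.induce {v | v ∈ s ∧ f v = c}).IsAcyclic

namespace ArbAux

open SimpleGraph

variable {V : Type*} {G : SimpleGraph V} {s : Set V}

/-- Lift a walk of `G` whose support lies in `s` to a walk of `G.induce s`. -/
def induceLift :
    ∀ {u w : V} (p : G.Walk u w), (∀ x ∈ p.support, x ∈ s) →
      ∀ (hu : u ∈ s) (hw : w ∈ s), (G.induce s).Walk ⟨u, hu⟩ ⟨w, hw⟩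
  | _, _, SimpleGraph.Walk.nil, _, _, _ => SimpleGraph.Walk.nil
  | _, _, SimpleGraph.Walk.cons a p, h, hu, hw =>
      SimpleGraph.Walk.cons (by exact a)
        (induceLift p (fun x hx => h x (by simp [hx])) (h _ (by simp)) hw)

lemma induceLift_map {u w : V} (p : G.Walk u w) (h : ∀ x ∈ p.support, x ∈ s)
    (hu : u ∈ s) (hw : w ∈ s) :
    (induceLift p h hu hw).map (SimpleGraph.Embedding.induce s).toHom = p := by
  induction p with
  | nil => rfl
  | cons a p ih =>
      simp only [induceLift, SimpleGraph.Walk.map_cons]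
      congr 1
      exact congrArg (SimpleGraph.Walk.cons a) (ih _ _ _)

/-- Acyclicity of an induced subgraph, characterized by cycles in the ambient graph. -/
lemma induce_acyclic_iff :
    (G.induce s).IsAcyclic ↔
      ∀ ⦃u : V⦄ (p : G.Walk u u), p.IsCycle → ¬ (∀ x ∈ p.support, x ∈ s) := by
  constructor
  · intro hA u p hp hsupp
    have hu : u ∈ s := hsupp u p.start_mem_support
    have hc : (induceLift p hsupp hu hu).IsCycle := by
      rw [← SimpleGraph.Walk.map_isCycle_iff_of_injective
        (p := induceLift p hsupp hu hu) (f := (SimpleGraph.Embedding.induce s).toHom)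
        Subtype.val_injective]
      rw [induceLift_map]
      exact hp
    exact hA _ hc
  · rintro h ⟨u, hu⟩ c hc
    have hmap : (c.map (SimpleGraph.Embedding.induce s).toHom).IsCycle :=
      hc.map Subtype.val_injective
    refine h _ hmap ?_
    intro x hx
    rw [SimpleGraph.Walk.support_map, List.mem_map] at hx
    obtain ⟨y, _, rfl⟩ := hx
    exact y.2

/-- Adding a vertex with at most one neighbour in `s` preserves acyclicity of the
induced subgraph. -/
lemma extend_acyclic {w : V} (hw : w ∉ s) (hs : (G.induce s).IsAcyclic)
    (hnb : ∀ a b : V, a ∈ s → G.Adj w a → b ∈ s → G.Adj w b → a = b) :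
    (G.induce (insert w s)).IsAcyclic := by
  classical
  rw [induce_acyclic_iff]
  intro u p hp hsupp
  by_cases hwp : w ∈ p.support
  · -- rotate the cycle to start at `w`
    set q := p.rotate w hwp with hq
    have hqc : q.IsCycle := hp.rotate hwp
    have hqsupp : ∀ x ∈ q.support, x ∈ insert w s := by
      intro x hx
      rw [q.support_eq_cons, List.mem_cons] at hx
      rcases hx with rfl | hx
      · exact Set.mem_insert _ _
      · have : x ∈ p.support.tail := ((SimpleGraph.Walk.support_rotate p w hwp).mem_iff).mp hx
        exact hsupp x (List.mem_of_mem_tail this)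
    clear_value q
    clear hq hp hsupp
    -- decompose q = cons a r
    cases q with
    | nil => exact hqc.ne_nil rfl
    | @cons _ x _ a r =>
      rw [SimpleGraph.Walk.cons_isCycle_iff] at hqc
      obtain ⟨hr, hedge⟩ := hqc
      -- x is a neighbour of w in s
      have hxs : x ∈ s := by
        have := hqsupp x (by simp)
        rcases this with h | h
        · exact absurd h.symm a.ne
        · exact h
      -- decompose r from the w-end using its reverse
      have hrnil : ¬ r.reverse.Nil := SimpleGraph.Walk.not_nil_of_ne a.ne
      rw [SimpleGraph.Walk.not_nil_iff] at hrnil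
      obtain ⟨y, b, t, hbt⟩ := hrnil
      -- b : G.Adj w y, since r.reverse : Walk w x
      have hys : y ∈ s := by
        have hy : y ∈ r.support := by
          have : y ∈ r.reverse.support := by rw [hbt]; simp
          rwa [SimpleGraph.Walk.support_reverse, List.mem_reverse] at this
        have := hqsupp y (by simp [hy])
        rcases this with h | h
        · exact absurd h.symm b.ne
        · exact h
      have hxy : x = y := hnb x y hxs a hys b
      -- but then the edge s(w,x) lies in r.edges, contradiction
      apply hedge
      have : s(w, y) ∈ r.reverse.edges := by rw [hbt]; simp
      rw [SimpleGraph.Walk.edges_reverse, List.mem_reverse] at this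
      rw [← hxy] at this
      exact this
  · -- the cycle avoids w, so it lives in s
    rw [induce_acyclic_iff] at hs
    refine hs p hp ?_
    intro x hx
    rcases hsupp x hx with h | h
    · exact absurd (h ▸ hx) hwp
    · exact h

lemma arbColOn_congr {α : Type*} {f : V → α} {t : Set V} (h : s = t) :
    ArbColOn G s f → ArbColOn G t f := by subst h; exact id

/-- Pigeonhole: with at most 5 neighbours and 3 colors, some color is used by
at most one neighbour. -/
lemma pigeonhole {α : Type*} [Fintype V] (N : Set V) (hN : N.ncard ≤ 5)
    (L : Finset α) (hL : L.card = 3) (f : V → α) :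
    ∃ c ∈ L, ∀ a b : V, a ∈ N → f a = c → b ∈ N → f b = c → a = b := by
  classical
  by_contra hcon
  push_neg at hcon
  have h2 : ∀ c ∈ L, 2 ≤ (N.toFinset.filter (fun u => f u = c)).card := by
    intro c hc
    obtain ⟨a, b, ha, hfa, hb, hfb, hab⟩ := hcon c hc
    have ha' : a ∈ N.toFinset.filter (fun u => f u = c) := by
      simp [Set.mem_toFinset, ha, hfa]
    have hb' : b ∈ N.toFinset.filter (fun u => f u = c) := by
      simp [Set.mem_toFinset, hb, hfb]
    exact Finset.one_lt_card.mpr ⟨a, ha', b, hb', hab⟩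
  set T := N.toFinset.filter (fun u => f u ∈ L) with hT
  have hfib : T.card = ∑ c ∈ L, (T.filter (fun u => f u = c)).card :=
    Finset.card_eq_sum_card_fiberwise (fun x hx => (Finset.mem_filter.mp hx).2)
  have hsub : ∀ c ∈ L, (N.toFinset.filter (fun u => f u = c)) ⊆ T.filter (fun u => f u = c) := by
    intro c hc u hu
    rw [Finset.mem_filter] at hu ⊢
    rw [hT, Finset.mem_filter]
    exact ⟨⟨hu.1, hu.2 ▸ hc⟩, hu.2⟩
  have h6 : 6 ≤ T.card := by
    rw [hfib]
    calc (6 : ℕ) = ∑ _c ∈ L, 2 := by rw [Finset.sum_const, hL]; norm_num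
    _ ≤ ∑ c ∈ L, (T.filter (fun u => f u = c)).card := by
        refine Finset.sum_le_sum ?_
        intro c hc
        exact le_trans (h2 c hc) (Finset.card_le_card (hsub c hc))
  have hTN : T.card ≤ N.ncard := by
    rw [Set.ncard_eq_toFinset_card']
    exact Finset.card_le_card (Finset.filter_subset _ _)
  omega

end ArbAux

open ArbAux in
theorem stmt_0 {V α : Type*} [Fintype V] (G : SimpleGraph V)
    (L : V → Finset α) (hL : ∀ x, (L x).card = 3)
    (k : ℕ) (v : Fin k → V) (hv : Function.Injective v)
    -- for every i, the degree of `v i` in `G_i = G − {v j : j > i}` is at most 5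
    (hdeg : ∀ i : Fin k,
      {u | (∀ j : Fin k, (i : ℕ) < (j : ℕ) → u ≠ v j) ∧ G.Adj (v i) u}.ncard ≤ 5)
    (f : V → α)
    -- `f` is an arboreal L-coloring of `G_0 = G − {v 1, …, v k}`
    (hfL : ∀ x, (∀ j : Fin k, x ≠ v j) → f x ∈ L x)
    (hf : ArbColOn G {x | ∀ j : Fin k, x ≠ v j} f) :
    -- it extends to an arboreal L-coloring of `G`
    ∃ g : V → α, (∀ x, g x ∈ L x) ∧ ArbColOn G Set.univ g ∧
      ∀ x, (∀ j : Fin k, x ≠ v j) → g x = f x := by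
  classical
  revert v hv hdeg f hfL hf
  induction k with
  | zero =>
      intro v hv hdeg f hfL hf
      refine ⟨f, fun x => hfL x (fun j => j.elim0), ?_, fun x _ => rfl⟩
      intro c
      have hset : {x | x ∈ Set.univ ∧ f x = c} =
          {x | x ∈ {y | ∀ j : Fin 0, y ≠ v j} ∧ f x = c} := by
        ext x
        simp only [Set.mem_setOf_eq, Set.mem_univ, true_and]
        exact ⟨fun h => ⟨fun j => j.elim0, h⟩, fun h => h.2⟩
      rw [hset]
      exact hf c
  | succ k ih =>
      intro v hv hdeg f hfL hf
      set w : V := v 0 with hwdef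
      set s : Set V := {x | ∀ j : Fin (k + 1), x ≠ v j} with hsdef
      have hws : w ∉ s := fun h => h 0 rfl
      -- the set of neighbours of w in s has at most 5 elements
      set N : Set V := {u | u ∈ s ∧ G.Adj w u} with hNdef
      have hN5 : N.ncard ≤ 5 := by
        refine le_trans (Set.ncard_le_ncard ?_ (Set.toFinite _)) (hdeg 0)
        rintro u ⟨hus, hadj⟩
        exact ⟨fun j _ => hus j, hadj⟩
      obtain ⟨c, hcL, hc1⟩ := pigeonhole N hN5 (L w) (hL w) f
      set g1 : V → α := Function.update f w c with hg1def
      have hg1w : g1 w = c := Function.update_self w c f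
      have hg1x : ∀ x, x ≠ w → g1 x = f x := fun x hx => Function.update_of_ne hx c f
      set v' : Fin k → V := fun j => v j.succ with hv'def
      have hv' : Function.Injective v' := fun a b hab =>
        Fin.succ_injective k (hv hab)
      have hsins : {x | ∀ j : Fin k, x ≠ v' j} = insert w s := by
        ext x
        simp only [Set.mem_insert_iff, Set.mem_setOf_eq, hsdef]
        constructor
        · intro h
          by_cases hxw : x = w
          · exact Or.inl hxw
          · refine Or.inr (fun j => ?_)
            refine Fin.cases ?_ (fun j' => h j') j
            exact hxw
        · rintro (rfl | h) j
          · intro hh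
            exact Fin.succ_ne_zero j (hv hh.symm)
          · exact h j.succ
      have hdeg' : ∀ i : Fin k,
          {u | (∀ j : Fin k, (i : ℕ) < (j : ℕ) → u ≠ v' j) ∧ G.Adj (v' i) u}.ncard ≤ 5 := by
        intro i
        have hseteq : {u | (∀ j : Fin k, (i : ℕ) < (j : ℕ) → u ≠ v' j) ∧ G.Adj (v' i) u} =
            {u | (∀ j : Fin (k + 1), ((i.succ : Fin (k+1)) : ℕ) < (j : ℕ) → u ≠ v j) ∧
              G.Adj (v i.succ) u} := by
          ext u
          simp only [Set.mem_setOf_eq, hv'def, Fin.val_succ]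
          constructor
          · rintro ⟨h1, h2⟩
            refine ⟨fun j hj => ?_, h2⟩
            refine Fin.cases ?_ (fun j' hj' => ?_) j hj
            · intro h
              rw [Fin.val_zero] at h
              omega
            · refine h1 j' ?_
              simp only [Fin.val_succ] at hj'
              omega
          · rintro ⟨h1, h2⟩
            exact ⟨fun j hj => h1 j.succ (by simpa using hj), h2⟩
        rw [hseteq]
        exact hdeg i.succ
      have hg1L : ∀ x, (∀ j : Fin k, x ≠ v' j) → g1 x ∈ L x := by
        intro x hx
        by_cases hxw : x = w
        · subst hxw; rw [hg1w]; exact hcL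
        · rw [hg1x x hxw]
          refine hfL x (fun j => ?_)
          refine Fin.cases ?_ (fun j' => hx j') j
          exact hxw
      have hg1arb : ArbColOn G {x | ∀ j : Fin k, x ≠ v' j} g1 := by
        intro c'
        by_cases hcc : c' = c
        · subst hcc
          have hseteq : {x | x ∈ {y | ∀ j : Fin k, y ≠ v' j} ∧ g1 x = c'} =
              insert w {x | x ∈ s ∧ f x = c'} := by
            rw [hsins]
            ext x
            by_cases hxw : x = w
            · subst hxw
              simp [hg1w, hws]
            · simp only [Set.mem_setOf_eq, Set.mem_insert_iff, hxw, false_or,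
                hg1x x hxw]
          rw [hseteq]
          refine extend_acyclic (fun h => hws h.1) (hf c') ?_
          rintro a b ⟨has, hfa⟩ hwa ⟨hbs, hfb⟩ hwb
          exact hc1 a b ⟨has, hwa⟩ hfa ⟨hbs, hwb⟩ hfb
        · have hseteq : {x | x ∈ {y | ∀ j : Fin k, y ≠ v' j} ∧ g1 x = c'} =
              {x | x ∈ s ∧ f x = c'} := by
            rw [hsins]
            ext x
            by_cases hxw : x = w
            · subst hxw
              simp only [Set.mem_setOf_eq, Set.mem_insert_iff, hg1w]
              constructor
              · rintro ⟨-, hgc⟩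
                exact absurd hgc.symm hcc
              · rintro ⟨hws', -⟩
                exact absurd hws' hws
            · simp only [Set.mem_setOf_eq, Set.mem_insert_iff, hxw, false_or,
                hg1x x hxw]
          rw [hseteq]
          exact hf c'
      obtain ⟨g, hgL, hgarb, hgagree⟩ := ih v' hv' hdeg' g1 hg1L hg1arb
      refine ⟨g, hgL, hgarb, ?_⟩
      intro x hx
      rw [hgagree x (fun j => hx j.succ)]
      exact hg1x x (hx 0)
end

section
/- Let G be a finite simple graph, let L be a list-assignment for G with |L(v)| = 3 for every vertex v, and let v_1, …, v_k be distinct vertices of G. For i = 0, …, k let G_i denote the induced subgraph G − {v_{i+1}, …, v_k} (so G_k = G and G_0 = G − {v_1, …, v_k}). If for every i = 1, …, k the degree of v_i in G_i is at most 5, and moreover there exists an index i with the degree of v_i in G_i at most 3, then every arboreal L-coloring of G_0 can be extended to an arboreal L-coloring of G in at least two distinct ways. -/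
namespace ArbAux

open SimpleGraph

variable {V α : Type*}

lemma getVert_support_get {G : SimpleGraph V} {a b : V} (p : G.Walk a b) {i : ℕ}
    (hi : i ≤ p.length) : p.support[i]? = some (p.getVert i) := by
  induction p generalizing i with
  | nil =>
    simp only [Walk.length_nil, Nat.le_zero] at hi
    subst hi; rfl
  | cons h q ih =>
    cases i with
    | zero => simp
    | succ n =>
      simp only [Walk.support_cons, List.getElem?_cons_succ, Walk.getVert_cons_succ]
      exact ih (by simpa using hi)

lemma cycle_two_neighbors {G : SimpleGraph V} {v : V} (w : G.Walk v v) (hw : w.IsCycle) :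
    ∃ a b : V, a ≠ b ∧ G.Adj v a ∧ G.Adj v b ∧ a ∈ w.support ∧ b ∈ w.support := by
  have h3 := hw.three_le_length
  refine ⟨w.getVert 1, w.getVert (w.length - 1), ?_, ?_, ?_, ?_, ?_⟩
  · -- distinctness
    intro hEq
    have hnd := hw.2
    have hlen : w.support.length = w.length + 1 := w.length_support
    have h1 : w.support[1]? = some (w.getVert 1) := getVert_support_get w (by omega)
    have h2 : w.support[w.length - 1]? = some (w.getVert (w.length - 1)) :=
      getVert_support_get w (by omega)
    rw [show w.length - 1 = (w.length - 2) + 1 by omega] at h2 hEq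
    have hsupp := w.support_eq_cons
    rw [hsupp] at h1 h2
    simp only [List.getElem?_cons_succ] at h1
    simp only [List.getElem?_cons_succ] at h2
    rw [hEq] at h1
    have := (List.getElem?_inj (l := w.support.tail) (i := 0) (j := w.length - 2)
      (by simp [List.length_tail, hlen]; omega) hnd).mp (h1.trans h2.symm)
    omega
  · have := w.adj_getVert_succ (i := 0) (by omega)
    simpa using this
  · have := w.adj_getVert_succ (i := w.length - 1) (by omega)
    rw [show w.length - 1 + 1 = w.length by omega, w.getVert_length] at this
    exact this.symm
  · have h1 : w.support[1]? = some (w.getVert 1) := getVert_support_get w (by omega)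
    exact List.mem_iff_getElem?.mpr ⟨_, h1⟩
  · have h2 : w.support[w.length - 1]? = some (w.getVert (w.length - 1)) :=
      getVert_support_get w (by omega)
    exact List.mem_iff_getElem?.mpr ⟨_, h2⟩

lemma exists_lift {G : SimpleGraph V} {s : Set V} :
    ∀ {a b : V} (w : G.Walk a b) (hsupp : ∀ x ∈ w.support, x ∈ s),
    ∃ w' : (G.induce s).Walk ⟨a, hsupp a w.start_mem_support⟩ ⟨b, hsupp b w.end_mem_support⟩,
      w'.map (SimpleGraph.Embedding.induce (G := G) s).toHom = w := by
  intro a b w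
  induction w with
  | nil => intro h; exact ⟨.nil, rfl⟩
  | @cons u x b hadj p ih =>
    intro h
    obtain ⟨p', hp'⟩ := ih (fun y hy => h y (by simp [hy]))
    exact ⟨.cons (by exact hadj) p', by exact congrArg (Walk.cons hadj) hp'⟩

lemma acyclic_induce_iff {G : SimpleGraph V} (s : Set V) :
    (G.induce s).IsAcyclic ↔
      ∀ (a : V) (w : G.Walk a a), w.IsCycle → ¬∀ x ∈ w.support, x ∈ s := by
  constructor
  · intro h a w hw hsupp
    obtain ⟨w', hw'⟩ := exists_lift w hsupp
    have hc : w'.IsCycle := by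
      rw [← Walk.map_isCycle_iff_of_injective (p := w')
        (f := (Embedding.induce (G := G) s).toHom)
        (Embedding.induce (G := G) s).injective, hw']
      exact hw
    exact h w' hc
  · intro h a' w' hw'
    have hc : (w'.map (Embedding.induce (G := G) s).toHom).IsCycle :=
      hw'.map (Embedding.induce (G := G) s).injective
    refine h _ _ hc ?_
    intro x hx
    rw [Walk.support_map, List.mem_map] at hx
    obtain ⟨y, -, rfl⟩ := hx
    exact y.2

lemma extend_arbcol [DecidableEq V] {G : SimpleGraph V} {s : Set V} {f : V → α} {v : V} {c : α}
    (hv : v ∉ s) (hf : ArbColOn G s f)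
    (hnb : {u | u ∈ s ∧ G.Adj v u ∧ f u = c}.Subsingleton) :
    ArbColOn G (insert v s) (Function.update f v c) := by
  intro d
  rw [acyclic_induce_iff]
  intro a w hw hsupp
  by_cases hvw : v ∈ w.support
  · -- the color must be c
    have hd : d = c := by
      have := (hsupp v hvw).2
      rw [Function.update_self] at this
      exact this.symm
    -- rotate the cycle to start at v
    have hw2 : (w.rotate v hvw).IsCycle := hw.rotate hvw
    obtain ⟨x, y, hxy, hax, hay, hxs, hys⟩ := cycle_two_neighbors (w.rotate v hvw) hw2
    have hmem : ∀ z ∈ (w.rotate v hvw).support,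
        z ∈ {u | (u ∈ insert v s) ∧ Function.update f v c u = d} := by
      intro z hz
      rw [Walk.support_eq_cons] at hz
      rcases List.mem_cons.mp hz with h | h
      · subst h; exact hsupp z hvw
      · exact hsupp z (w.support_eq_cons ▸
          List.mem_cons.mpr (Or.inr ((w.support_rotate v hvw).mem_iff.mp h)))
    have hx' : x ∈ {u | u ∈ s ∧ G.Adj v u ∧ f u = c} := by
      have h1 := hmem x hxs
      have hxv : x ≠ v := fun h => G.irrefl (h ▸ hax)
      refine ⟨?_, hax, ?_⟩
      · rcases h1.1 with h | h
        · exact absurd h hxv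
        · exact h
      · have := h1.2; rw [Function.update_of_ne hxv] at this; rw [this, hd]
    have hy' : y ∈ {u | u ∈ s ∧ G.Adj v u ∧ f u = c} := by
      have h1 := hmem y hys
      have hyv : y ≠ v := fun h => G.irrefl (h ▸ hay)
      refine ⟨?_, hay, ?_⟩
      · rcases h1.1 with h | h
        · exact absurd h hyv
        · exact h
      · have := h1.2; rw [Function.update_of_ne hyv] at this; rw [this, hd]
    exact hxy (hnb hx' hy')
  · -- cycle avoids v : contradict hf
    have := (acyclic_induce_iff _).mp (hf d) a w hw
    apply this
    intro x hx
    have hxv : x ≠ v := fun h => hvw (h ▸ hx)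
    have h1 := hsupp x hx
    refine ⟨?_, ?_⟩
    · rcases h1.1 with h | h
      · exact absurd h hxv
      · exact h
    · have := h1.2; rwa [Function.update_of_ne hxv] at this

open Classical in
lemma few_bad (L : Finset α) (N : Set V) (hfin : N.Finite) (f : V → α) :
    2 * (L.filter (fun c => 2 ≤ {u | u ∈ N ∧ f u = c}.ncard)).card ≤ N.ncard := by
  classical
  set Nf := hfin.toFinset with hNf
  set B := L.filter (fun c => 2 ≤ {u | u ∈ N ∧ f u = c}.ncard) with hB
  have hclass : ∀ c, {u | u ∈ N ∧ f u = c}.ncard = (Nf.filter (fun u => f u = c)).card := by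
    intro c
    rw [← Set.ncard_coe_finset]
    congr 1
    ext u
    simp [hNf, Set.Finite.mem_toFinset]
  have hdisj : (B : Set α).PairwiseDisjoint (fun c => Nf.filter (fun u => f u = c)) := by
    intro c₁ h₁ c₂ h₂ hne
    refine Finset.disjoint_left.mpr ?_
    intro u hu₁ hu₂
    simp only [Finset.mem_filter] at hu₁ hu₂
    exact hne (hu₁.2.symm.trans hu₂.2)
  have hcard : ∑ c ∈ B, (Nf.filter (fun u => f u = c)).card ≤ Nf.card := by
    rw [← Finset.card_biUnion hdisj]
    refine Finset.card_le_card ?_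
    intro u hu
    simp only [Finset.mem_biUnion, Finset.mem_filter] at hu
    obtain ⟨c, -, hu, -⟩ := hu
    exact hu
  have hlow : B.card • 2 ≤ ∑ c ∈ B, (Nf.filter (fun u => f u = c)).card := by
    refine Finset.card_nsmul_le_sum B _ 2 ?_
    intro c hc
    rw [hB, Finset.mem_filter] at hc
    rw [← hclass c]
    exact hc.2
  have : N.ncard = Nf.card := by rw [← Set.ncard_coe_finset]; congr 1; simp [hNf]
  rw [this]
  calc 2 * B.card = B.card • 2 := by rw [smul_eq_mul, mul_comm]
    _ ≤ _ := hlow.trans hcard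

open Classical in
lemma pigeon5 (L : Finset α) (hL : L.card = 3) (N : Set V) (hfin : N.Finite)
    (hN : N.ncard ≤ 5) (f : V → α) :
    ∃ c ∈ L, {u | u ∈ N ∧ f u = c}.ncard ≤ 1 := by
  classical
  have h := few_bad L N hfin f
  have hsplit := Finset.card_filter_add_card_filter_not
    (s := L) (p := fun c => 2 ≤ {u | u ∈ N ∧ f u = c}.ncard)
  have hgood : 0 < (L.filter (fun c => ¬ 2 ≤ {u | u ∈ N ∧ f u = c}.ncard)).card := by omega
  obtain ⟨c, hc⟩ := Finset.card_pos.mp hgood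
  rw [Finset.mem_filter] at hc
  exact ⟨c, hc.1, by omega⟩

open Classical in
lemma pigeon3 (L : Finset α) (hL : L.card = 3) (N : Set V) (hfin : N.Finite)
    (hN : N.ncard ≤ 3) (f : V → α) :
    ∃ c₁ ∈ L, ∃ c₂ ∈ L, c₁ ≠ c₂ ∧ {u | u ∈ N ∧ f u = c₁}.ncard ≤ 1 ∧
      {u | u ∈ N ∧ f u = c₂}.ncard ≤ 1 := by
  classical
  have h := few_bad L N hfin f
  have hsplit := Finset.card_filter_add_card_filter_not
    (s := L) (p := fun c => 2 ≤ {u | u ∈ N ∧ f u = c}.ncard)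
  have hgood : 1 < (L.filter (fun c => ¬ 2 ≤ {u | u ∈ N ∧ f u = c}.ncard)).card := by omega
  obtain ⟨c₁, hc₁, c₂, hc₂, hne⟩ := Finset.one_lt_card.mp hgood
  rw [Finset.mem_filter] at hc₁ hc₂
  exact ⟨c₁, hc₁.1, c₂, hc₂.1, hne, by omega, by omega⟩

lemma insert_eq_succ {k : ℕ} (v : Fin (k + 1) → V) (hv : Function.Injective v) :
    {x : V | ∀ j : Fin k, x ≠ v j.succ} = insert (v 0) {x : V | ∀ j : Fin (k + 1), x ≠ v j} := by
  ext x
  simp only [Set.mem_setOf_eq, Set.mem_insert_iff]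
  constructor
  · intro h
    by_cases hx : x = v 0
    · exact Or.inl hx
    · refine Or.inr fun j => ?_
      refine Fin.cases hx (fun i => h i) j
  · rintro (rfl | h) j
    · intro hEq
      exact (Fin.succ_ne_zero j).symm (hv hEq)
    · exact h j.succ

lemma nbr_eq_succ {G : SimpleGraph V} {k : ℕ} (v : Fin (k + 1) → V) (i : Fin k) :
    {u : V | (∀ j : Fin k, (i : ℕ) < (j : ℕ) → u ≠ v j.succ) ∧ G.Adj (v i.succ) u}
      = {u : V | (∀ j : Fin (k + 1), ((i.succ : Fin (k + 1)) : ℕ) < (j : ℕ) → u ≠ v j) ∧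
          G.Adj (v i.succ) u} := by
  ext u
  simp only [Set.mem_setOf_eq, and_congr_left_iff, Fin.val_succ]
  intro _
  constructor
  · intro h j hj
    have hj0 : j ≠ 0 := by
      intro h0; subst h0; simp at hj
    obtain ⟨m, rfl⟩ := Fin.exists_succ_eq.mpr hj0
    exact h m (by simpa using hj)
  · intro h j hj
    exact h j.succ (by simpa using Nat.succ_lt_succ hj)

lemma step_L [DecidableEq V] {k : ℕ} (v : Fin (k + 1) → V) (L : V → Finset α)
    (f : V → α) (c : α) (hc : c ∈ L (v 0))
    (hfL : ∀ x, (∀ j : Fin (k + 1), x ≠ v j) → f x ∈ L x) :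
    ∀ x, (∀ j : Fin k, x ≠ v j.succ) → Function.update f (v 0) c x ∈ L x := by
  intro x hx
  by_cases h : x = v 0
  · subst h; rw [Function.update_self]; exact hc
  · rw [Function.update_of_ne h]
    exact hfL x (fun j => Fin.cases h (fun i => hx i) j)

lemma step_arbcol [Fintype V] [DecidableEq V] {G : SimpleGraph V} {k : ℕ} (v : Fin (k + 1) → V)
    (hv : Function.Injective v) (f : V → α) (c : α)
    (hf : ArbColOn G {x : V | ∀ j : Fin (k + 1), x ≠ v j} f)
    (hc1 : {u : V | ((∀ j : Fin (k + 1), ((0 : Fin (k + 1)) : ℕ) < (j : ℕ) → u ≠ v j) ∧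
        G.Adj (v 0) u) ∧ f u = c}.ncard ≤ 1) :
    ArbColOn G {x : V | ∀ j : Fin k, x ≠ v j.succ} (Function.update f (v 0) c) := by
  rw [insert_eq_succ v hv]
  refine extend_arbcol ?_ hf ?_
  · intro h; exact h 0 rfl
  · intro a ha b hb
    have key : ∀ x, x ∈ {u : V | u ∈ {x : V | ∀ j : Fin (k + 1), x ≠ v j} ∧
        G.Adj (v 0) u ∧ f u = c} →
        x ∈ {u : V | ((∀ j : Fin (k + 1), ((0 : Fin (k + 1)) : ℕ) < (j : ℕ) → u ≠ v j) ∧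
          G.Adj (v 0) u) ∧ f u = c} := by
      intro x hx
      exact ⟨⟨fun j _ => hx.1 j, hx.2.1⟩, hx.2.2⟩
    exact (Set.ncard_le_one (Set.toFinite _)).mp hc1 a (key a ha) b (key b hb)

variable [Fintype V]

lemma lemmaA (G : SimpleGraph V) (L : V → Finset α) (hL : ∀ x, (L x).card = 3) :
    ∀ (k : ℕ) (v : Fin k → V), Function.Injective v →
      (∀ i : Fin k, {u | (∀ j : Fin k, (i : ℕ) < (j : ℕ) → u ≠ v j) ∧ G.Adj (v i) u}.ncard ≤ 5) →
      ∀ f : V → α, (∀ x, (∀ j : Fin k, x ≠ v j) → f x ∈ L x) →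
      ArbColOn G {x | ∀ j : Fin k, x ≠ v j} f →
      ∃ g : V → α, (∀ x, g x ∈ L x) ∧ ArbColOn G Set.univ g ∧
        ∀ x, (∀ j : Fin k, x ≠ v j) → g x = f x := by
  intro k
  induction k with
  | zero =>
    intro v _ _ f hfL hf
    refine ⟨f, fun x => hfL x (fun j => j.elim0), ?_, fun x _ => rfl⟩
    have hs : {x : V | ∀ j : Fin 0, x ≠ v j} = Set.univ := by
      ext x
      simp only [Set.mem_setOf_eq, Set.mem_univ, iff_true]
      exact fun j => j.elim0
    rwa [hs] at hf
  | succ k ih =>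
    intro v hv hdeg f hfL hf
    classical
    obtain ⟨c, hcL, hc1⟩ := pigeon5 (L (v 0)) (hL (v 0)) _ (Set.toFinite _) (hdeg 0) f
    have hstep : ArbColOn G {x : V | ∀ j : Fin k, x ≠ v j.succ} (Function.update f (v 0) c) :=
      step_arbcol v hv f c hf hc1
    obtain ⟨g, hgL, hgU, hgf⟩ := ih (v ∘ Fin.succ) (hv.comp (Fin.succ_injective k))
      (fun i => by
        have := hdeg i.succ
        rw [show {u | (∀ j : Fin k, (i : ℕ) < (j : ℕ) → u ≠ (v ∘ Fin.succ) j) ∧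
            G.Adj ((v ∘ Fin.succ) i) u} =
          {u : V | (∀ j : Fin k, (i : ℕ) < (j : ℕ) → u ≠ v j.succ) ∧ G.Adj (v i.succ) u} from rfl,
          nbr_eq_succ v i]
        exact this)
      (Function.update f (v 0) c)
      (step_L v L f c hcL hfL) hstep
    refine ⟨g, hgL, hgU, ?_⟩
    intro x hx
    have hx' : ∀ j : Fin k, x ≠ (v ∘ Fin.succ) j := fun j => hx j.succ
    rw [hgf x hx', Function.update_of_ne (hx 0)]

lemma lemmaB (G : SimpleGraph V) (L : V → Finset α) (hL : ∀ x, (L x).card = 3) :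
    ∀ (k : ℕ) (v : Fin k → V), Function.Injective v →
      (∀ i : Fin k, {u | (∀ j : Fin k, (i : ℕ) < (j : ℕ) → u ≠ v j) ∧ G.Adj (v i) u}.ncard ≤ 5) →
      (∃ i : Fin k, {u | (∀ j : Fin k, (i : ℕ) < (j : ℕ) → u ≠ v j) ∧ G.Adj (v i) u}.ncard ≤ 3) →
      ∀ f : V → α, (∀ x, (∀ j : Fin k, x ≠ v j) → f x ∈ L x) →
      ArbColOn G {x | ∀ j : Fin k, x ≠ v j} f →
      ∃ g₁ g₂ : V → α,
        ((∀ x, g₁ x ∈ L x) ∧ ArbColOn G Set.univ g₁ ∧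
          ∀ x, (∀ j : Fin k, x ≠ v j) → g₁ x = f x) ∧
        ((∀ x, g₂ x ∈ L x) ∧ ArbColOn G Set.univ g₂ ∧
          ∀ x, (∀ j : Fin k, x ≠ v j) → g₂ x = f x) ∧
        g₁ ≠ g₂ := by
  intro k
  induction k with
  | zero =>
    rintro v _ _ ⟨i, -⟩
    exact i.elim0
  | succ k ih =>
    intro v hv hdeg hdeg3 f hfL hf
    classical
    obtain ⟨i, hi3⟩ := hdeg3
    rcases Fin.eq_zero_or_eq_succ i with rfl | ⟨m, rfl⟩
    · -- two choices at v 0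
      obtain ⟨c₁, hc₁L, c₂, hc₂L, hcc, hc₁, hc₂⟩ :=
        pigeon3 (L (v 0)) (hL (v 0)) _ (Set.toFinite _) hi3 f
      have hv0s : ∀ j : Fin k, v 0 ≠ (v ∘ Fin.succ) j := fun j hEq =>
        (Fin.succ_ne_zero j).symm (hv hEq)
      have hdeg' : ∀ i : Fin k, {u | (∀ j : Fin k, (i : ℕ) < (j : ℕ) →
          u ≠ (v ∘ Fin.succ) j) ∧ G.Adj ((v ∘ Fin.succ) i) u}.ncard ≤ 5 := fun i => by
        have := hdeg i.succ
        rw [show {u | (∀ j : Fin k, (i : ℕ) < (j : ℕ) → u ≠ (v ∘ Fin.succ) j) ∧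
            G.Adj ((v ∘ Fin.succ) i) u} =
          {u : V | (∀ j : Fin k, (i : ℕ) < (j : ℕ) → u ≠ v j.succ) ∧ G.Adj (v i.succ) u} from rfl,
          nbr_eq_succ v i]
        exact this
      obtain ⟨g₁, hg₁L, hg₁U, hg₁f⟩ := lemmaA G L hL k (v ∘ Fin.succ)
        (hv.comp (Fin.succ_injective k)) hdeg'
        (Function.update f (v 0) c₁) (step_L v L f c₁ hc₁L hfL)
        (step_arbcol v hv f c₁ hf hc₁)
      obtain ⟨g₂, hg₂L, hg₂U, hg₂f⟩ := lemmaA G L hL k (v ∘ Fin.succ)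
        (hv.comp (Fin.succ_injective k)) hdeg'
        (Function.update f (v 0) c₂) (step_L v L f c₂ hc₂L hfL)
        (step_arbcol v hv f c₂ hf hc₂)
      refine ⟨g₁, g₂, ⟨hg₁L, hg₁U, ?_⟩, ⟨hg₂L, hg₂U, ?_⟩, ?_⟩
      · intro x hx
        rw [hg₁f x (fun j => hx j.succ), Function.update_of_ne (hx 0)]
      · intro x hx
        rw [hg₂f x (fun j => hx j.succ), Function.update_of_ne (hx 0)]
      · intro hEq
        have h1 : g₁ (v 0) = c₁ := by
          rw [hg₁f (v 0) hv0s, Function.update_self]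
        have h2 : g₂ (v 0) = c₂ := by
          rw [hg₂f (v 0) hv0s, Function.update_self]
        rw [hEq, h2] at h1
        exact hcc h1.symm
    · -- witness is later : single choice at v 0, then IH
      obtain ⟨c, hcL, hc1⟩ := pigeon5 (L (v 0)) (hL (v 0)) _ (Set.toFinite _) (hdeg 0) f
      have hdeg' : ∀ i : Fin k, {u | (∀ j : Fin k, (i : ℕ) < (j : ℕ) →
          u ≠ (v ∘ Fin.succ) j) ∧ G.Adj ((v ∘ Fin.succ) i) u}.ncard ≤ 5 := fun i => by
        have := hdeg i.succ
        rw [show {u | (∀ j : Fin k, (i : ℕ) < (j : ℕ) → u ≠ (v ∘ Fin.succ) j) ∧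
            G.Adj ((v ∘ Fin.succ) i) u} =
          {u : V | (∀ j : Fin k, (i : ℕ) < (j : ℕ) → u ≠ v j.succ) ∧ G.Adj (v i.succ) u} from rfl,
          nbr_eq_succ v i]
        exact this
      have hdeg3' : ∃ i : Fin k, {u | (∀ j : Fin k, (i : ℕ) < (j : ℕ) →
          u ≠ (v ∘ Fin.succ) j) ∧ G.Adj ((v ∘ Fin.succ) i) u}.ncard ≤ 3 := by
        refine ⟨m, ?_⟩
        rw [show {u | (∀ j : Fin k, (m : ℕ) < (j : ℕ) → u ≠ (v ∘ Fin.succ) j) ∧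
            G.Adj ((v ∘ Fin.succ) m) u} =
          {u : V | (∀ j : Fin k, (m : ℕ) < (j : ℕ) → u ≠ v j.succ) ∧ G.Adj (v m.succ) u} from rfl,
          nbr_eq_succ v m]
        exact hi3
      obtain ⟨g₁, g₂, ⟨hg₁L, hg₁U, hg₁f⟩, ⟨hg₂L, hg₂U, hg₂f⟩, hne⟩ :=
        ih (v ∘ Fin.succ) (hv.comp (Fin.succ_injective k)) hdeg' hdeg3'
          (Function.update f (v 0) c) (step_L v L f c hcL hfL)
          (step_arbcol v hv f c hf hc1)
      refine ⟨g₁, g₂, ⟨hg₁L, hg₁U, ?_⟩, ⟨hg₂L, hg₂U, ?_⟩, hne⟩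
      · intro x hx
        rw [hg₁f x (fun j => hx j.succ), Function.update_of_ne (hx 0)]
      · intro x hx
        rw [hg₂f x (fun j => hx j.succ), Function.update_of_ne (hx 0)]

end ArbAux

theorem stmt_1 {V α : Type*} [Fintype V] (G : SimpleGraph V)
    (L : V → Finset α) (hL : ∀ x, (L x).card = 3)
    (k : ℕ) (v : Fin k → V) (hv : Function.Injective v)
    -- for every i, the degree of `v i` in `G_i = G − {v j : j > i}` is at most 5
    (hdeg : ∀ i : Fin k,
      {u | (∀ j : Fin k, (i : ℕ) < (j : ℕ) → u ≠ v j) ∧ G.Adj (v i) u}.ncard ≤ 5)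
    -- there is an index i whose degree in `G_i` is at most 3
    (hdeg3 : ∃ i : Fin k,
      {u | (∀ j : Fin k, (i : ℕ) < (j : ℕ) → u ≠ v j) ∧ G.Adj (v i) u}.ncard ≤ 3)
    (f : V → α)
    -- `f` is an arboreal L-coloring of `G_0 = G − {v 1, …, v k}`
    (hfL : ∀ x, (∀ j : Fin k, x ≠ v j) → f x ∈ L x)
    (hf : ArbColOn G {x | ∀ j : Fin k, x ≠ v j} f) :
    -- it extends to an arboreal L-coloring of `G` in at least two distinct ways
    ∃ g₁ g₂ : V → α,
      ((∀ x, g₁ x ∈ L x) ∧ ArbColOn G Set.univ g₁ ∧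
        ∀ x, (∀ j : Fin k, x ≠ v j) → g₁ x = f x) ∧
      ((∀ x, g₂ x ∈ L x) ∧ ArbColOn G Set.univ g₂ ∧
        ∀ x, (∀ j : Fin k, x ≠ v j) → g₂ x = f x) ∧
      g₁ ≠ g₂ :=
  ArbAux.lemmaB G L hL k v hv hdeg hdeg3 f hfL hf
end

section
/- Let G be a finite simple graph, let L be a list-assignment for G with |L(v)| = 3 for every vertex v, and let u be a vertex of degree 4 that is adjacent to a vertex w of degree at most 5. Then every arboreal L-coloring of G − {u, w} can be extended to an arboreal L-coloring of G in at least two distinct ways. -/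
open SimpleGraph

/-- The restriction of `G` to a vertex set `t`, as a graph on all of `V`
(vertices outside `t` are isolated). -/
def Res {V : Type*} (G : SimpleGraph V) (t : Set V) : SimpleGraph V where
  Adj a b := G.Adj a b ∧ a ∈ t ∧ b ∈ t
  symm := ⟨by rintro a b ⟨h, ha, hb⟩; exact ⟨h.symm, hb, ha⟩⟩
  loopless := ⟨by rintro a ⟨h, _, _⟩; exact G.loopless.irrefl a h⟩

def resHom {V : Type*} (G : SimpleGraph V) (t : Set V) : G.induce t →g Res G t where
  toFun := Subtype.val
  map_rel' := by rintro a b h; exact ⟨h, a.2, b.2⟩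

/-- Lift a walk in `Res G t` to the induced subgraph on `t`. -/
def liftWalk {V : Type*} (G : SimpleGraph V) (t : Set V) :
    ∀ {x y : V}, (p : (Res G t).Walk x y) → (hx : x ∈ t) → (hy : y ∈ t) →
      (G.induce t).Walk ⟨x, hx⟩ ⟨y, hy⟩
  | _, _, SimpleGraph.Walk.nil, _, _ => SimpleGraph.Walk.nil
  | _, _, SimpleGraph.Walk.cons h q, hx, hy =>
      SimpleGraph.Walk.cons (by exact h.1) (liftWalk G t q h.2.2 hy)

lemma map_liftWalk {V : Type*} (G : SimpleGraph V) (t : Set V) :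
    ∀ {x y : V} (p : (Res G t).Walk x y) (hx : x ∈ t) (hy : y ∈ t),
      (liftWalk G t p hx hy).map (resHom G t) = p
  | _, _, SimpleGraph.Walk.nil, _, _ => rfl
  | _, _, SimpleGraph.Walk.cons h q, hx, hy => by
      show SimpleGraph.Walk.cons _ ((liftWalk G t q h.2.2 hy).map (resHom G t)) = SimpleGraph.Walk.cons h q
      rw [map_liftWalk G t q h.2.2 hy]
      rfl

lemma resHom_injective {V : Type*} (G : SimpleGraph V) (t : Set V) :
    Function.Injective (resHom G t) := Subtype.val_injective

lemma res_acyclic_iff {V : Type*} (G : SimpleGraph V) (t : Set V) :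
    (G.induce t).IsAcyclic ↔ (Res G t).IsAcyclic := by
  constructor
  · intro h v p hp
    have hv : v ∈ t := by
      cases p with
      | nil => exact absurd rfl hp.ne_nil
      | cons h' q => exact h'.2.1
    have hmap : ((liftWalk G t p hv hv).map (resHom G t)).IsCycle := by
      rw [map_liftWalk]; exact hp
    rw [SimpleGraph.Walk.map_isCycle_iff_of_injective (resHom_injective G t)] at hmap
    exact h _ hmap
  · intro h v p hp
    exact h ((p.map (resHom G t)))
      ((SimpleGraph.Walk.map_isCycle_iff_of_injective (resHom_injective G t)).2 hp)

lemma reach_eq_of_isolated {V : Type*} {H : SimpleGraph V} {a b : V}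
    (ha : ∀ z, ¬ H.Adj a z) (h : H.Reachable a b) : a = b := by
  obtain ⟨p⟩ := h
  cases p with
  | nil => rfl
  | cons h' _ => exact absurd h' (ha _)

/-- Key lemma: adding edges at a single vertex `u` to an acyclic graph keeps it
acyclic, provided no two distinct new neighbors of `u` are joined by a path. -/
lemma key_acyclic {V : Type*} {H H' : SimpleGraph V} (u : V)
    (hnew : ∀ a b, H'.Adj a b → a ≠ u → b ≠ u → H.Adj a b)
    (hH : H.IsAcyclic)
    (hpair : ∀ x y, H'.Adj u x → H'.Adj u y → x ≠ y → ¬ H.Reachable x y) :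
    H'.IsAcyclic := by
  classical
  have main : ∀ q : H'.Walk u u, ¬ q.IsCycle := by
    intro q hq
    cases q with
    | nil => exact hq.ne_nil rfl
    | @cons _ x _ h r =>
      -- h : H'.Adj u x, r : H'.Walk x u
      obtain ⟨hrpath, hedge⟩ := (SimpleGraph.Walk.cons_isCycle_iff r h).1 hq
      obtain ⟨y, h', r', hr⟩ := SimpleGraph.Walk.exists_eq_cons_of_ne h.ne r.reverse
      -- h' : H'.Adj u y, r' : H'.Walk y x
      have hxy : x ≠ y := by
        rintro rfl
        apply hedge
        have : s(u, x) ∈ r.reverse.edges := by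
          rw [hr]; exact List.mem_cons_self
        rwa [SimpleGraph.Walk.edges_reverse, List.mem_reverse] at this
      have hrrev : r.reverse.IsPath := hrpath.reverse
      rw [hr, SimpleGraph.Walk.cons_isPath_iff] at hrrev
      obtain ⟨hr'path, hur'⟩ := hrrev
      have hEdges : ∀ e ∈ r'.edges, e ∈ H.edgeSet := by
        intro e he
        induction e using Sym2.ind with
        | _ a b =>
          have ha : a ∈ r'.support := SimpleGraph.Walk.fst_mem_support_of_mem_edges r' he
          have hb : b ∈ r'.support := SimpleGraph.Walk.snd_mem_support_of_mem_edges r' he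
          have hadj : H'.Adj a b := r'.adj_of_mem_edges he
          exact (hnew a b hadj (fun h => hur' (h ▸ ha)) (fun h => hur' (h ▸ hb)))
      have hreach : H.Reachable y x := ⟨r'.transfer H hEdges⟩
      exact hpair x y h h' hxy hreach.symm
  intro v p hp
  by_cases hmem : u ∈ p.support
  · exact main (p.rotate u hmem) (hp.rotate hmem)
  · have hEdges : ∀ e ∈ p.edges, e ∈ H.edgeSet := by
      intro e he
      induction e using Sym2.ind with
      | _ a b =>
        have ha : a ∈ p.support := SimpleGraph.Walk.fst_mem_support_of_mem_edges p he
        have hb : b ∈ p.support := SimpleGraph.Walk.snd_mem_support_of_mem_edges p he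
        have hadj : H'.Adj a b := p.adj_of_mem_edges he
        exact hnew a b hadj (fun h => hmem (h ▸ ha)) (fun h => hmem (h ▸ hb))
    exact hH (p.transfer H hEdges) (hp.transfer hEdges)

lemma arbColOn_iff_res {V α : Type*} (G : SimpleGraph V) (s : Set V) (f : V → α) :
    ArbColOn G s f ↔ ∀ c, (Res G {v | v ∈ s ∧ f v = c}).IsAcyclic :=
  forall_congr' fun c => res_acyclic_iff G _

lemma arbColOn_congr {V α : Type*} {G : SimpleGraph V} {s : Set V} {f g : V → α}
    (h : ∀ x ∈ s, f x = g x) (hf : ArbColOn G s f) : ArbColOn G s g := by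
  intro c
  have hset : {v | v ∈ s ∧ g v = c} = {v | v ∈ s ∧ f v = c} := by
    ext x; exact and_congr_right fun hx => by rw [h x hx]
  rw [hset]; exact hf c

/-- Extension lemma: we may add a vertex `u` to an arboreal coloring provided
any two distinct same-colored neighbors of `u` are not joined within the color class. -/
lemma arbColOn_extend {V α : Type*} {G : SimpleGraph V} {s : Set V} {f : V → α} {u : V}
    (hu : u ∉ s) (hs : ArbColOn G s f)
    (hcond : ∀ x y, x ∈ s → y ∈ s → G.Adj u x → G.Adj u y → f x = f u → f y = f u → x ≠ y →
      ¬ (Res G {v | v ∈ s ∧ f v = f u}).Reachable x y) :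
    ArbColOn G (insert u s) f := by
  rw [arbColOn_iff_res] at hs ⊢
  intro c
  by_cases hc : f u = c
  · subst hc
    apply key_acyclic (H := Res G {v | v ∈ s ∧ f v = f u}) u
    · rintro a b ⟨hab, ⟨ha, hfa⟩, hb, hfb⟩ hau hbu
      exact ⟨hab, ⟨(Set.mem_insert_iff.1 ha).resolve_left hau, hfa⟩,
        ⟨(Set.mem_insert_iff.1 hb).resolve_left hbu, hfb⟩⟩
    · exact hs (f u)
    · rintro x y ⟨hux, -, hx, hfx⟩ ⟨huy, -, hy, hfy⟩ hxy
      exact hcond x y ((Set.mem_insert_iff.1 hx).resolve_left (fun h => hux.ne h.symm))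
        ((Set.mem_insert_iff.1 hy).resolve_left (fun h => huy.ne h.symm)) hux huy hfx hfy hxy
  · have hset : {v | v ∈ insert u s ∧ f v = c} = {v | v ∈ s ∧ f v = c} := by
      ext x
      simp only [Set.mem_setOf_eq, Set.mem_insert_iff]
      constructor
      · rintro ⟨(rfl | hx), hfx⟩
        · exact absurd hfx hc
        · exact ⟨hx, hfx⟩
      · rintro ⟨hx, hfx⟩; exact ⟨Or.inr hx, hfx⟩
    rw [hset]; exact hs c

/-- Extension lemma, easy version: `u` has at most one same-colored neighbor. -/
lemma arbColOn_extend_safe {V α : Type*} {G : SimpleGraph V} {s : Set V} {f : V → α} {u : V}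
    (hu : u ∉ s) (hs : ArbColOn G s f)
    (hsafe : ∀ x y, x ∈ s → y ∈ s → G.Adj u x → G.Adj u y → f x = f u → f y = f u → x = y) :
    ArbColOn G (insert u s) f :=
  arbColOn_extend hu hs fun x y hx hy hux huy hfx hfy hxy _ =>
    hxy (hsafe x y hx hy hux huy hfx hfy)

section Counting

variable {V α : Type*} [DecidableEq α]

lemma filter_three_le (N : Finset V) (g : V → α) {a b c : α}
    (hab : a ≠ b) (hac : a ≠ c) (hbc : b ≠ c) :
    (N.filter (fun x => g x = a)).card + (N.filter (fun x => g x = b)).card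
      + (N.filter (fun x => g x = c)).card ≤ N.card ∧
    ((N.filter (fun x => g x = a)).card + (N.filter (fun x => g x = b)).card
      + (N.filter (fun x => g x = c)).card = N.card →
      ∀ x ∈ N, g x = a ∨ g x = b ∨ g x = c) := by
  classical
  set A := N.filter (fun x => g x = a)
  set B := N.filter (fun x => g x = b)
  set C := N.filter (fun x => g x = c)
  have hdAB : Disjoint A B := by
    rw [Finset.disjoint_left]
    intro x hxA hxB
    have h1 := (Finset.mem_filter.1 hxA).2
    have h2 := (Finset.mem_filter.1 hxB).2
    exact hab (h1 ▸ h2 ▸ rfl)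
  have hdABC : Disjoint (A ∪ B) C := by
    rw [Finset.disjoint_left]
    intro x hxAB hxC
    have h3 := (Finset.mem_filter.1 hxC).2
    rcases Finset.mem_union.1 hxAB with hxA | hxB
    · exact hac ((Finset.mem_filter.1 hxA).2 ▸ h3 ▸ rfl)
    · exact hbc ((Finset.mem_filter.1 hxB).2 ▸ h3 ▸ rfl)
  have hcard : (A ∪ B ∪ C).card = A.card + B.card + C.card := by
    rw [Finset.card_union_of_disjoint hdABC, Finset.card_union_of_disjoint hdAB]
  have hsub : A ∪ B ∪ C ⊆ N := by
    apply Finset.union_subset (Finset.union_subset ?_ ?_) ?_ <;> exact Finset.filter_subset _ _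
  constructor
  · rw [← hcard]; exact Finset.card_le_card hsub
  · intro heq x hx
    have : A ∪ B ∪ C = N := Finset.eq_of_subset_of_card_le hsub (by omega)
    rw [← this] at hx
    rcases Finset.mem_union.1 hx with hx' | hxC
    · rcases Finset.mem_union.1 hx' with hxA | hxB
      · exact Or.inl (Finset.mem_filter.1 hxA).2
      · exact Or.inr (Or.inl (Finset.mem_filter.1 hxB).2)
    · exact Or.inr (Or.inr (Finset.mem_filter.1 hxC).2)

/-- Pigeonhole: with 3 colors and at most 4 neighbors, either two colors are
each used at most once, or some color is unused. -/
lemma pigeonA (N : Finset V) (Lv : Finset α) (h3 : Lv.card = 3) (hN : N.card ≤ 4) (g : V → α) :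
    (∃ c₁ ∈ Lv, ∃ c₂ ∈ Lv, c₁ ≠ c₂ ∧ (N.filter (fun x => g x = c₁)).card ≤ 1 ∧
      (N.filter (fun x => g x = c₂)).card ≤ 1) ∨
    ∃ c ∈ Lv, (N.filter (fun x => g x = c)).card = 0 := by
  obtain ⟨a, b, c, hab, hac, hbc, rfl⟩ := Finset.card_eq_three.1 h3
  have hmem : ∀ z : α, z = a ∨ z = b ∨ z = c → z ∈ ({a, b, c} : Finset α) := by
    intro z hz; simp [hz]
  obtain ⟨hle, -⟩ := filter_three_le N g hab hac hbc
  set na := (N.filter (fun x => g x = a)).card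
  set nb := (N.filter (fun x => g x = b)).card
  set nc := (N.filter (fun x => g x = c)).card
  rcases le_or_gt na 1 with h1 | h1 <;> rcases le_or_gt nb 1 with h2 | h2 <;>
    rcases le_or_gt nc 1 with h3' | h3'
  · exact Or.inl ⟨a, hmem a (Or.inl rfl), b, hmem b (Or.inr (Or.inl rfl)), hab, h1, h2⟩
  · exact Or.inl ⟨a, hmem a (Or.inl rfl), b, hmem b (Or.inr (Or.inl rfl)), hab, h1, h2⟩
  · exact Or.inl ⟨a, hmem a (Or.inl rfl), c, hmem c (Or.inr (Or.inr rfl)), hac, h1, h3'⟩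
  · exact Or.inr ⟨a, hmem a (Or.inl rfl), by omega⟩
  · exact Or.inl ⟨b, hmem b (Or.inr (Or.inl rfl)), c, hmem c (Or.inr (Or.inr rfl)), hbc, h2, h3'⟩
  · exact Or.inr ⟨b, hmem b (Or.inr (Or.inl rfl)), by omega⟩
  · exact Or.inr ⟨c, hmem c (Or.inr (Or.inr rfl)), by omega⟩
  · omega

/-- Pigeonhole: a color used at most once exists. -/
lemma pigeon_safe (N : Finset V) (Lv : Finset α) (h3 : Lv.card = 3) (hN : N.card ≤ 4)
    (g : V → α) : ∃ c ∈ Lv, (N.filter (fun x => g x = c)).card ≤ 1 := by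
  rcases pigeonA N Lv h3 hN g with ⟨c₁, hc₁, _, _, _, h, _⟩ | ⟨c, hc, h⟩
  · exact ⟨c₁, hc₁, h⟩
  · exact ⟨c, hc, by omega⟩

/-- Refined pigeonhole in the "bad" case with exactly 4 neighbors. -/
lemma pigeonB (N : Finset V) (Lv : Finset α) (h3 : Lv.card = 3) (hN : N.card = 4) (g : V → α)
    (hbad : ¬ (∃ c₁ ∈ Lv, ∃ c₂ ∈ Lv, c₁ ≠ c₂ ∧ (N.filter (fun x => g x = c₁)).card ≤ 1 ∧
      (N.filter (fun x => g x = c₂)).card ≤ 1)) :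
    ∃ c ∈ Lv, (N.filter (fun x => g x = c)).card = 0 ∧
      (∀ d ∈ Lv, d ≠ c → (N.filter (fun x => g x = d)).card = 2) ∧
      (∀ x ∈ N, g x ∈ Lv) := by
  obtain ⟨a, b, c, hab, hac, hbc, rfl⟩ := Finset.card_eq_three.1 h3
  have hmem : ∀ z : α, z = a ∨ z = b ∨ z = c → z ∈ ({a, b, c} : Finset α) := by
    intro z hz; simp [hz]
  obtain ⟨hle, heq⟩ := filter_three_le N g hab hac hbc
  set na := (N.filter (fun x => g x = a)).card with hna
  set nb := (N.filter (fun x => g x = b)).card with hnb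
  set nc := (N.filter (fun x => g x = c)).card with hnc
  have hAB : ¬ (na ≤ 1 ∧ nb ≤ 1) := fun ⟨h1, h2⟩ =>
    hbad ⟨a, hmem a (Or.inl rfl), b, hmem b (Or.inr (Or.inl rfl)), hab, h1, h2⟩
  have hAC : ¬ (na ≤ 1 ∧ nc ≤ 1) := fun ⟨h1, h2⟩ =>
    hbad ⟨a, hmem a (Or.inl rfl), c, hmem c (Or.inr (Or.inr rfl)), hac, h1, h2⟩
  have hBC : ¬ (nb ≤ 1 ∧ nc ≤ 1) := fun ⟨h1, h2⟩ =>
    hbad ⟨b, hmem b (Or.inr (Or.inl rfl)), c, hmem c (Or.inr (Or.inr rfl)), hbc, h1, h2⟩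
  have hall : ∀ x ∈ N, g x ∈ ({a, b, c} : Finset α) := by
    intro x hx
    exact hmem _ (heq (by omega) x hx)
  have hd : ∀ d ∈ ({a, b, c} : Finset α), d = a ∨ d = b ∨ d = c := by
    intro d hd; simpa using hd
  rcases le_or_gt na 1 with h1 | h1
  · refine ⟨a, hmem a (Or.inl rfl), by omega, ?_, hall⟩
    intro d hdm hda
    rcases hd d hdm with rfl | rfl | rfl
    · exact absurd rfl hda
    · omega
    · omega
  · rcases le_or_gt nb 1 with h2 | h2
    · refine ⟨b, hmem b (Or.inr (Or.inl rfl)), by omega, ?_, hall⟩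
      intro d hdm hdb
      rcases hd d hdm with rfl | rfl | rfl
      · omega
      · exact absurd rfl hdb
      · omega
    · refine ⟨c, hmem c (Or.inr (Or.inr rfl)), by omega, ?_, hall⟩
      intro d hdm hdc
      rcases hd d hdm with rfl | rfl | rfl
      · omega
      · omega
      · exact absurd rfl hdc

end Counting

theorem stmt_5 {V α : Type*} [Fintype V] (G : SimpleGraph V)
    (L : V → Finset α) (hL : ∀ x, (L x).card = 3)
    (u w : V) (hadj : G.Adj u w)
    (hu : (G.neighborSet u).ncard = 4) (hw : (G.neighborSet w).ncard ≤ 5)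
    (f : V → α)
    (hfL : ∀ x, x ∉ ({u, w} : Set V) → f x ∈ L x)
    (hf : ArbColOn G ({u, w} : Set V)ᶜ f) :
    ∃ g₁ g₂ : V → α,
      ((∀ x, g₁ x ∈ L x) ∧ ArbColOn G Set.univ g₁ ∧
        ∀ x, x ∉ ({u, w} : Set V) → g₁ x = f x) ∧
      ((∀ x, g₂ x ∈ L x) ∧ ArbColOn G Set.univ g₂ ∧
        ∀ x, x ∉ ({u, w} : Set V) → g₂ x = f x) ∧
      g₁ ≠ g₂ := by
  classical
  have huw : u ≠ w := hadj.ne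
  set S : Set V := ({u, w} : Set V)ᶜ with hS
  have hSmem : ∀ x, x ∈ S ↔ x ≠ u ∧ x ≠ w := by
    intro x; simp [hS, Set.mem_compl_iff]
  have huS : u ∉ S := fun h => ((hSmem u).1 h).1 rfl
  have hwS : w ∉ S := fun h => ((hSmem w).1 h).2 rfl
  have hinsw : insert w S = ({u} : Set V)ᶜ := by
    ext x
    simp only [Set.mem_insert_iff, Set.mem_compl_iff, Set.mem_singleton_iff, hSmem]
    constructor
    · rintro (rfl | ⟨h1, h2⟩)
      · exact huw.symm
      · exact h1
    · intro hx
      rcases eq_or_ne x w with rfl | hxw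
      · exact Or.inl rfl
      · exact Or.inr ⟨hx, hxw⟩
  have hucompl : u ∉ ({u} : Set V)ᶜ := by simp
  have hinsu : insert u (({u} : Set V)ᶜ) = Set.univ := by
    ext x
    simp only [Set.mem_insert_iff, Set.mem_compl_iff, Set.mem_singleton_iff, Set.mem_univ,
      iff_true]
    exact eq_or_ne x u
  -- neighbor finsets
  set NU : Finset V := Finset.univ.filter (fun x => G.Adj u x) with hNU
  set NW : Finset V := Finset.univ.filter (fun x => G.Adj w x ∧ x ≠ u) with hNW
  have hNUmem : ∀ x, x ∈ NU ↔ G.Adj u x := by intro x; simp [hNU]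
  have hNWmem : ∀ x, x ∈ NW ↔ G.Adj w x ∧ x ≠ u := by intro x; simp [hNW]
  have hNUcard : NU.card = 4 := by
    have : G.neighborSet u = ↑NU := by ext x; simp [hNU, SimpleGraph.mem_neighborSet]
    rw [this, Set.ncard_coe_finset] at hu
    exact hu
  have hNWcard : NW.card ≤ 4 := by
    set FW : Finset V := Finset.univ.filter (fun x => G.Adj w x) with hFW
    have hFWcard : FW.card ≤ 5 := by
      have : G.neighborSet w = ↑FW := by ext x; simp [hFW, SimpleGraph.mem_neighborSet]
      rw [this, Set.ncard_coe_finset] at hw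
      exact hw
    have huFW : u ∈ FW := by simp [hFW, hadj.symm]
    have : NW = FW.erase u := by
      ext x
      simp only [hNWmem, Finset.mem_erase, hFW, Finset.mem_filter, Finset.mem_univ, true_and]
      tauto
    rw [this, Finset.card_erase_of_mem huFW]
    omega
  -- members of NW are in S
  have hNWS : ∀ x ∈ NW, x ∈ S := by
    intro x hx
    rw [hNWmem] at hx
    exact (hSmem x).2 ⟨hx.2, fun h => G.loopless.irrefl w (h ▸ hx.1)⟩
  -- Step 1: coloring w with a color used at most once among its colored neighbors.
  have step1 : ∀ c : α, (NW.filter (fun x => f x = c)).card ≤ 1 →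
      ArbColOn G (({u} : Set V)ᶜ) (Function.update f w c) := by
    intro c hc
    set F := Function.update f w c with hF
    have hfS : ArbColOn G S F := by
      apply arbColOn_congr (f := f) _ hf
      intro x hx
      rw [hF, Function.update_of_ne ((hSmem x).1 hx).2]
    rw [← hinsw]
    apply arbColOn_extend_safe hwS hfS
    intro x y hx hy hwx hwy hfx hfy
    have hFw : F w = c := Function.update_self _ _ _
    have hxNW : x ∈ NW.filter (fun z => f z = c) := by
      rw [Finset.mem_filter, hNWmem]
      refine ⟨⟨hwx, ((hSmem x).1 hx).1⟩, ?_⟩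
      rw [← Function.update_of_ne ((hSmem x).1 hx).2 c f, ← hF, hfx, hFw]
    have hyNW : y ∈ NW.filter (fun z => f z = c) := by
      rw [Finset.mem_filter, hNWmem]
      refine ⟨⟨hwy, ((hSmem y).1 hy).1⟩, ?_⟩
      rw [← Function.update_of_ne ((hSmem y).1 hy).2 c f, ← hF, hfy, hFw]
    exact Finset.card_le_one.1 hc x hxNW y hyNW
  -- Step 2: coloring u with a color used at most once among its colored neighbors.
  have step2 : ∀ (F : V → α) (cu : α), ArbColOn G (({u} : Set V)ᶜ) F →
      (NU.filter (fun x => F x = cu)).card ≤ 1 →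
      ArbColOn G Set.univ (Function.update F u cu) := by
    intro F cu hFcol hcu
    set g := Function.update F u cu with hg
    have hgS : ArbColOn G (({u} : Set V)ᶜ) g := by
      apply arbColOn_congr (f := F) _ hFcol
      intro x hx
      rw [hg, Function.update_of_ne (by simpa using hx)]
    rw [← hinsu]
    apply arbColOn_extend_safe hucompl hgS
    intro x y hx hy hux huy hfx hfy
    have hgu : g u = cu := Function.update_self _ _ _
    have hxm : x ∈ NU.filter (fun z => F z = cu) := by
      rw [Finset.mem_filter, hNUmem]
      refine ⟨hux, ?_⟩
      rw [← Function.update_of_ne (by simpa using hx : x ≠ u) cu F, ← hg, hfx, hgu]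
    have hym : y ∈ NU.filter (fun z => F z = cu) := by
      rw [Finset.mem_filter, hNUmem]
      refine ⟨huy, ?_⟩
      rw [← Function.update_of_ne (by simpa using hy : y ≠ u) cu F, ← hg, hfy, hgu]
    exact Finset.card_le_one.1 hcu x hxm y hym
  -- generic properties of the final colorings
  have props : ∀ (cw cu : α), cw ∈ L w → cu ∈ L u →
      (∀ x, (Function.update (Function.update f w cw) u cu) x ∈ L x) ∧
      (∀ x, x ∉ ({u, w} : Set V) →
        (Function.update (Function.update f w cw) u cu) x = f x) := by
    intro cw cu hcw hcu
    constructor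
    · intro x
      rcases eq_or_ne x u with rfl | hxu
      · rwa [Function.update_self]
      · rw [Function.update_of_ne hxu]
        rcases eq_or_ne x w with rfl | hxw
        · rwa [Function.update_self]
        · rw [Function.update_of_ne hxw]
          exact hfL x (by simp [hxu, hxw])
    · intro x hx
      simp only [Set.mem_insert_iff, Set.mem_singleton_iff, not_or] at hx
      rw [Function.update_of_ne hx.1, Function.update_of_ne hx.2]
  -- Case split on whether w has two safe colors
  by_cases htwoW : ∃ c₁ ∈ L w, ∃ c₂ ∈ L w, c₁ ≠ c₂ ∧
      (NW.filter (fun x => f x = c₁)).card ≤ 1 ∧ (NW.filter (fun x => f x = c₂)).card ≤ 1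
  · -- Case A : two extensions differing at w
    obtain ⟨c₁, hc₁, c₂, hc₂, hc12, hs1, hs2⟩ := htwoW
    have hcol1 := step1 c₁ hs1
    have hcol2 := step1 c₂ hs2
    obtain ⟨cu₁, hcu₁, hsafe1⟩ :=
      pigeon_safe NU (L u) (hL u) (by omega) (Function.update f w c₁)
    obtain ⟨cu₂, hcu₂, hsafe2⟩ :=
      pigeon_safe NU (L u) (hL u) (by omega) (Function.update f w c₂)
    refine ⟨Function.update (Function.update f w c₁) u cu₁,
      Function.update (Function.update f w c₂) u cu₂, ?_, ?_, ?_⟩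
    · obtain ⟨hp1, hp2⟩ := props c₁ cu₁ hc₁ hcu₁
      exact ⟨hp1, step2 _ cu₁ hcol1 hsafe1, hp2⟩
    · obtain ⟨hp1, hp2⟩ := props c₂ cu₂ hc₂ hcu₂
      exact ⟨hp1, step2 _ cu₂ hcol2 hsafe2, hp2⟩
    · intro hcontra
      have := congrFun hcontra w
      rw [Function.update_of_ne huw.symm, Function.update_of_ne huw.symm,
        Function.update_self, Function.update_self] at this
      exact hc12 this
  · -- Case B : w gets a color unused among its neighbors
    have hB := pigeonA NW (L w) (hL w) hNWcard f
    rcases hB with htwo | ⟨c0, hc0, hzero⟩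
    · exact absurd htwo htwoW
    set F := Function.update f w c0 with hF
    have hFcol : ArbColOn G (({u} : Set V)ᶜ) F := step1 c0 (by omega)
    have hFw : F w = c0 := Function.update_self _ _ _
    -- now color u
    by_cases htwoU : ∃ c₁ ∈ L u, ∃ c₂ ∈ L u, c₁ ≠ c₂ ∧
        (NU.filter (fun x => F x = c₁)).card ≤ 1 ∧ (NU.filter (fun x => F x = c₂)).card ≤ 1
    · obtain ⟨c₁, hc₁, c₂, hc₂, hc12, hs1, hs2⟩ := htwoU
      refine ⟨Function.update F u c₁, Function.update F u c₂, ?_, ?_, ?_⟩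
      · obtain ⟨hp1, hp2⟩ := props c0 c₁ hc0 hc₁
        exact ⟨hp1, step2 F c₁ hFcol hs1, hp2⟩
      · obtain ⟨hp1, hp2⟩ := props c0 c₂ hc0 hc₂
        exact ⟨hp1, step2 F c₂ hFcol hs2, hp2⟩
      · intro hcontra
        have := congrFun hcontra u
        rw [Function.update_self, Function.update_self] at this
        exact hc12 this
    · obtain ⟨c', hc', hzc', htwo2, hallU⟩ := pigeonB NU (L u) (hL u) hNUcard F htwoU
      have hwNU : w ∈ NU := (hNUmem w).2 hadj
      have hc0Lu : c0 ∈ L u := by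
        have := hallU w hwNU
        rwa [hFw] at this
      have hc0c' : c0 ≠ c' := by
        intro h
        have hwf : w ∈ NU.filter (fun x => F x = c') := by
          rw [Finset.mem_filter]
          exact ⟨hwNU, by rw [hFw, h]⟩
        rw [Finset.card_eq_zero.1 hzc'] at hwf
        exact absurd hwf (Finset.notMem_empty w)
      have hcnt2 : (NU.filter (fun x => F x = c0)).card = 2 := htwo2 c0 hc0Lu hc0c'
      -- the other neighbor of u colored c0
      obtain ⟨x0, hx0, hx0w⟩ : ∃ x0 ∈ NU.filter (fun x => F x = c0), x0 ≠ w := by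
        have h1 : 1 < (NU.filter (fun x => F x = c0)).card := by omega
        obtain ⟨p, hp, q, hq, hpq⟩ := Finset.one_lt_card.1 h1
        rcases eq_or_ne p w with rfl | hpw
        · exact ⟨q, hq, fun h => hpq h.symm⟩
        · exact ⟨p, hp, hpw⟩
      -- w is isolated in the c0 color class on {u}ᶜ
      set g₂ := Function.update F u c0 with hg₂
      have hwiso : ∀ z, ¬ (Res G {v | v ∈ (({u} : Set V)ᶜ) ∧ g₂ v = c0}).Adj w z := by
        rintro z ⟨hwz, -, hz, hzc⟩
        have hzu : z ≠ u := by simpa using hz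
        have hzw : z ≠ w := fun h => G.loopless.irrefl w (h ▸ hwz)
        have hzNW : z ∈ NW := (hNWmem z).2 ⟨hwz, hzu⟩
        have hfz : f z = c0 := by
          rw [hg₂, Function.update_of_ne hzu, hF, Function.update_of_ne hzw] at hzc
          exact hzc
        have : z ∈ NW.filter (fun x => f x = c0) := Finset.mem_filter.2 ⟨hzNW, hfz⟩
        rw [Finset.card_eq_zero.1 hzero] at this
        exact absurd this (Finset.notMem_empty z)
      -- second extension : give u the color c0 (same as w)
      have hg₂col : ArbColOn G Set.univ g₂ := by
        have hgS : ArbColOn G (({u} : Set V)ᶜ) g₂ := by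
          apply arbColOn_congr (f := F) _ hFcol
          intro x hx
          rw [hg₂, Function.update_of_ne (by simpa using hx)]
        rw [← hinsu]
        apply arbColOn_extend hucompl hgS
        intro x y hx hy hux huy hfx hfy hxy hreach
        have hg₂u : g₂ u = c0 := by rw [hg₂]; exact Function.update_self _ _ _
        rw [hg₂u] at hfx hfy
        have hxu : x ≠ u := by simpa using hx
        have hyu : y ≠ u := by simpa using hy
        have hxm : x ∈ NU.filter (fun z => F z = c0) := by
          rw [Finset.mem_filter, hNUmem]
          exact ⟨hux, by rw [← Function.update_of_ne hxu c0 F, ← hg₂, hfx]⟩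
        have hym : y ∈ NU.filter (fun z => F z = c0) := by
          rw [Finset.mem_filter, hNUmem]
          exact ⟨huy, by rw [← Function.update_of_ne hyu c0 F, ← hg₂, hfy]⟩
        -- the filter has card 2 and contains w, x0 ; so one of x, y is w
        have hxyw : x = w ∨ y = w := by
          by_contra hcon
          push_neg at hcon
          have hwm : w ∈ NU.filter (fun z => F z = c0) :=
            Finset.mem_filter.2 ⟨hwNU, by rw [hFw]⟩
          have hsub : ({x, y, w} : Finset V) ⊆ NU.filter (fun z => F z = c0) := by
            intro t ht
            rcases Finset.mem_insert.1 ht with rfl | ht'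
            · exact hxm
            · rcases Finset.mem_insert.1 ht' with rfl | ht''
              · exact hym
              · rw [Finset.mem_singleton.1 ht'']; exact hwm
          have hcard3 : ({x, y, w} : Finset V).card = 3 := by
            rw [Finset.card_insert_of_notMem (by simp [hxy, hcon.1]),
              Finset.card_insert_of_notMem (by simp [hcon.2]), Finset.card_singleton]
          have := Finset.card_le_card hsub
          omega
        rw [hg₂u] at hreach
        rcases hxyw with rfl | rfl
        · exact hxy (reach_eq_of_isolated hwiso hreach)
        · exact hxy (reach_eq_of_isolated hwiso hreach.symm).symm
      refine ⟨Function.update F u c', g₂, ?_, ?_, ?_⟩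
      · obtain ⟨hp1, hp2⟩ := props c0 c' hc0 hc'
        exact ⟨hp1, step2 F c' hFcol (by omega), hp2⟩
      · obtain ⟨hp1, hp2⟩ := props c0 c0 hc0 hc0Lu
        exact ⟨hp1, hg₂col, hp2⟩
      · intro hcontra
        have := congrFun hcontra u
        rw [Function.update_self, hg₂, Function.update_self] at this
        exact hc0c' this.symm
end

section
/- Let G be a finite simple graph and let L be a list-assignment for G with |L(v)| = 3 for every vertex v. Let u be a vertex whose neighborhood is exactly {u_1, u_2, u_3, u_4}, where u_1u_2, u_2u_3, u_3u_4 and u_4u_1 are edges of G, and suppose that deg(u_1) ≤ 6, deg(u_2) ≤ 7 and deg(u_3) ≤ 6 (degrees taken in G). Then every arboreal L-coloring of G − {u, u_1, u_2, u_3} can be extended to an arboreal L-coloring of G in at least two distinct ways. -/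
-- auxiliary development

namespace ArbAux

open SimpleGraph Walk

variable {V : Type*} {α : Type*} (G : SimpleGraph V)

/-- spanning version of induced subgraph -/
def H (t : Set V) : SimpleGraph V where
  Adj x y := G.Adj x y ∧ x ∈ t ∧ y ∈ t
  symm := ⟨fun _ _ ⟨h, hx, hy⟩ => ⟨h.symm, hy, hx⟩⟩
  loopless := ⟨fun _ ⟨h, _, _⟩ => G.irrefl h⟩

variable {G}

lemma H_le {t : Set V} : H G t ≤ G := fun _ _ h => h.1

lemma walk_support_mem' {t : Set V} : ∀ {a b : V} (p : (H G t).Walk a b), a ∈ t →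
    ∀ x ∈ p.support, x ∈ t := by
  intro a b p
  induction p with
  | nil => intro ha x hx; simp at hx; subst hx; exact ha
  | @cons x y z h q ih =>
    intro _ w hw
    rw [SimpleGraph.Walk.support_cons] at hw
    rcases List.mem_cons.mp hw with rfl | hw'
    · exact h.2.1
    · exact ih h.2.2 w hw'

lemma cycle_start_mem {t : Set V} {a : V} (c : (H G t).Walk a a) (hc : c.IsCycle) : a ∈ t := by
  have hlen := hc.three_le_length
  have := c.adj_getVert_succ (i := 0) (by omega)
  rw [SimpleGraph.Walk.getVert_zero] at this
  exact this.2.1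

/-- lift a G-walk with support in t to a walk in the induced subgraph -/
lemma lift_walk {t : Set V} : ∀ {a b : V} (p : G.Walk a b) (_ : ∀ x ∈ p.support, x ∈ t)
    (ha : a ∈ t) (hb : b ∈ t),
    ∃ q : (G.induce t).Walk ⟨a, ha⟩ ⟨b, hb⟩,
      q.edges.map (Sym2.map Subtype.val) = p.edges ∧
      q.support.map Subtype.val = p.support := by
  intro a b p
  induction p with
  | nil =>
    intro _ ha _
    exact ⟨SimpleGraph.Walk.nil, by simp, by simp⟩
  | @cons x y z h q ih =>
    intro hs hx hz
    have hy : y ∈ t := hs y (by simp)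
    obtain ⟨q', he, hsup⟩ := ih (fun w hw => hs w (by simp [hw])) hy hz
    refine ⟨SimpleGraph.Walk.cons (by exact h : (G.induce t).Adj ⟨x, hx⟩ ⟨y, hy⟩) q', ?_, ?_⟩
    · exact congrArg (List.cons s(x, y)) he
    · exact congrArg (List.cons x) hsup

lemma isAcyclic_H_iff {t : Set V} : (H G t).IsAcyclic ↔ (G.induce t).IsAcyclic := by
  constructor
  · intro hH a q hq
    let φ : G.induce t →g H G t := ⟨Subtype.val, fun {p r} h => ⟨h, p.2, r.2⟩⟩
    have hinj : Function.Injective ⇑φ := fun _ _ h => Subtype.val_injective h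
    exact hH _ ((SimpleGraph.Walk.map_isCycle_iff_of_injective hinj).mpr hq)
  · intro hI a c hc
    have ha : a ∈ t := cycle_start_mem c hc
    have hsup := walk_support_mem' c ha
    obtain ⟨q, he, hs⟩ := lift_walk (c.mapLe H_le)
      (by
        intro x hx
        apply hsup
        simpa [SimpleGraph.Walk.mapLe] using hx) ha ha
    have hc' : (c.mapLe H_le).IsCycle := hc.mapLe _
    refine hI q ⟨⟨⟨?_⟩, ?_⟩, ?_⟩
    · exact List.Nodup.of_map (Sym2.map Subtype.val) (by rw [he]; exact hc'.edges_nodup)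
    · intro h
      subst h
      simp only [SimpleGraph.Walk.edges_nil, List.map_nil] at he
      have hlen : (c.mapLe H_le).length = 0 := by
        simpa [SimpleGraph.Walk.length_edges] using congrArg List.length he.symm
      have h3 := hc'.three_le_length
      omega
    · refine List.Nodup.of_map Subtype.val ?_
      rw [List.map_tail, hs]
      exact hc'.support_nodup

end ArbAux

namespace ArbAux

open SimpleGraph Walk

variable {V : Type*} {α : Type*} {G : SimpleGraph V}

/-- Arboreal coloring, spanning form. -/
def Arb (G : SimpleGraph V) (s : Set V) (g : V → α) : Prop :=
  ∀ c : α, (H G {v | v ∈ s ∧ g v = c}).IsAcyclic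

lemma arb_iff {s : Set V} {g : V → α} : ArbColOn G s g ↔ Arb G s g := by
  unfold ArbColOn Arb
  exact forall_congr' fun c => (isAcyclic_H_iff).symm

lemma arb_congr {s : Set V} {f g : V → α} (h : ∀ x ∈ s, g x = f x)
    (hf : Arb G s f) : Arb G s g := by
  intro c
  have : {v | v ∈ s ∧ g v = c} = {v | v ∈ s ∧ f v = c} := by
    ext x; exact and_congr_right fun hx => by rw [h x hx]
  rw [this]
  exact hf c

lemma H_insert {T : Set V} {v : V} (hT : (H G T).IsAcyclic)
    (hsub : {w | w ∈ T ∧ G.Adj v w}.Subsingleton) :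
    (H G (insert v T)).IsAcyclic := by
  classical
  intro a c hc
  by_cases hv : v ∈ c.support
  · have hc' : (c.rotate v hv).IsCycle := hc.rotate hv
    have hnn : ¬ (c.rotate v hv).Nil := by
      rw [SimpleGraph.Walk.nil_iff_length_eq]
      have := hc'.three_le_length
      omega
    obtain ⟨b, hadj, q, hq⟩ := SimpleGraph.Walk.not_nil_iff.mp hnn
    have hbT : b ∈ T := by
      rcases hadj.2.2 with h | h
      · exact absurd h.symm hadj.1.ne
      · exact h
    have hqnn : ¬ q.Nil := by
      rw [SimpleGraph.Walk.nil_iff_length_eq]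
      intro h0
      exact hadj.1.ne' (SimpleGraph.Walk.eq_of_length_eq_zero h0)
    have hrnn : ¬ q.reverse.Nil := by
      rw [SimpleGraph.Walk.nil_iff_length_eq, SimpleGraph.Walk.length_reverse]
      rw [SimpleGraph.Walk.nil_iff_length_eq] at hqnn
      exact hqnn
    obtain ⟨d, hadj2, r, hr⟩ := SimpleGraph.Walk.not_nil_iff.mp hrnn
    have hdT : d ∈ T := by
      rcases hadj2.2.2 with h | h
      · exact absurd h.symm hadj2.1.ne
      · exact h
    have hbd : b = d := hsub ⟨hbT, hadj.1⟩ ⟨hdT, hadj2.1⟩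
    have hmem : s(v, d) ∈ q.reverse.edges := by
      rw [hr]; simp
    rw [SimpleGraph.Walk.edges_reverse, List.mem_reverse] at hmem
    have hcyc2 : (SimpleGraph.Walk.cons hadj q).IsCycle := hq ▸ hc'
    have hnodup := hcyc2.edges_nodup
    rw [SimpleGraph.Walk.edges_cons] at hnodup
    rw [← hbd] at hmem
    exact (List.nodup_cons.mp hnodup).1 (by simpa [Sym2.eq_swap] using hmem)
  · have hedge : ∀ e ∈ c.edges, e ∈ (H G T).edgeSet := by
      intro e he
      induction e with
      | h x y =>
        have hxy := SimpleGraph.Walk.edges_subset_edgeSet c he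
        have hx : x ∈ c.support := SimpleGraph.Walk.fst_mem_support_of_mem_edges c he
        have hy : y ∈ c.support := SimpleGraph.Walk.snd_mem_support_of_mem_edges c he
        obtain ⟨hGxy, hx', hy'⟩ := hxy
        refine ⟨hGxy, ?_, ?_⟩
        · rcases hx' with h | h
          · exact absurd (h ▸ hx) hv
          · exact h
        · rcases hy' with h | h
          · exact absurd (h ▸ hy) hv
          · exact h
    exact hT _ (hc.transfer hedge)

lemma arb_insert {s : Set V} {g : V → α} (ha : Arb G s g) {v : V}
    (hsub : {w | w ∈ s ∧ G.Adj v w ∧ g w = g v}.Subsingleton) :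
    Arb G (insert v s) g := by
  intro c
  by_cases hc : g v = c
  · have hset : {w | w ∈ insert v s ∧ g w = c} = insert v {w | w ∈ s ∧ g w = c} := by
      ext w
      constructor
      · rintro ⟨hw | hw, hwc⟩
        · exact Or.inl hw
        · exact Or.inr ⟨hw, hwc⟩
      · rintro (rfl | ⟨hw, hwc⟩)
        · exact ⟨Or.inl rfl, hc⟩
        · exact ⟨Or.inr hw, hwc⟩
    rw [hset]
    refine H_insert (ha c) ?_
    intro x hx y hy
    exact hsub ⟨hx.1.1, hx.2, hx.1.2.trans hc.symm⟩ ⟨hy.1.1, hy.2, hy.1.2.trans hc.symm⟩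
  · have hset : {w | w ∈ insert v s ∧ g w = c} = {w | w ∈ s ∧ g w = c} := by
      ext w
      constructor
      · rintro ⟨hw | hw, hwc⟩
        · exact absurd (hw ▸ hwc) hc
        · exact ⟨hw, hwc⟩
      · rintro ⟨hw, hwc⟩
        exact ⟨Or.inr hw, hwc⟩
    rw [hset]
    exact ha c

end ArbAux

namespace ArbAux2

variable {V : Type*} {α : Type*} [Fintype V]

lemma subs_of_ncard_le_one {A : Set V} (h : A.ncard ≤ 1) : A.Subsingleton := by
  intro a ha b hb
  exact (Set.ncard_le_one (Set.toFinite A)).mp h a ha b hb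

lemma two_le_ncard {A : Set V} {x y : V} (hxy : x ≠ y) (hx : x ∈ A) (hy : y ∈ A) :
    2 ≤ A.ncard := by
  have : ({x, y} : Set V) ⊆ A := by intro w hw; rcases hw with rfl | hw; exact hx; rw [Set.mem_singleton_iff] at hw; exact hw ▸ hy
  calc 2 = ({x, y} : Set V).ncard := (Set.ncard_pair hxy).symm
    _ ≤ A.ncard := Set.ncard_le_ncard this (Set.toFinite A)

lemma three_le_ncard {A : Set V} {x y z : V} (hxy : x ≠ y) (hxz : x ≠ z) (hyz : y ≠ z)
    (hx : x ∈ A) (hy : y ∈ A) (hz : z ∈ A) : 3 ≤ A.ncard := by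
  have hsub : ({x, y, z} : Set V) ⊆ A := by
    intro w hw
    rcases hw with rfl | rfl | hw
    · exact hx
    · exact hy
    · rw [Set.mem_singleton_iff] at hw; exact hw ▸ hz
  have h3 : ({x, y, z} : Set V).ncard = 3 := by
    rw [Set.ncard_insert_of_notMem (by simp [hxy, hxz]), Set.ncard_pair hyz]
  calc 3 = ({x, y, z} : Set V).ncard := h3.symm
    _ ≤ A.ncard := Set.ncard_le_ncard hsub (Set.toFinite A)

lemma sum2_le {A B C : Set V} (hA : A ⊆ C) (hB : B ⊆ C) (hAB : Disjoint A B) :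
    A.ncard + B.ncard ≤ C.ncard := by
  rw [← Set.ncard_union_eq hAB (Set.toFinite A) (Set.toFinite B)]
  exact Set.ncard_le_ncard (Set.union_subset hA hB) (Set.toFinite C)

lemma sum3_le {A B C N : Set V} (hA : A ⊆ N) (hB : B ⊆ N) (hC : C ⊆ N)
    (hAB : Disjoint A B) (hAC : Disjoint A C) (hBC : Disjoint B C) :
    A.ncard + B.ncard + C.ncard ≤ N.ncard := by
  have h1 : (A ∪ B).ncard = A.ncard + B.ncard :=
    Set.ncard_union_eq hAB (Set.toFinite A) (Set.toFinite B)
  have h2 : Disjoint (A ∪ B) C := Set.disjoint_union_left.mpr ⟨hAC, hBC⟩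
  calc A.ncard + B.ncard + C.ncard = (A ∪ B).ncard + C.ncard := by rw [h1]
    _ = (A ∪ B ∪ C).ncard := (Set.ncard_union_eq h2 (Set.toFinite _) (Set.toFinite C)).symm
    _ ≤ N.ncard := Set.ncard_le_ncard (Set.union_subset (Set.union_subset hA hB) hC) (Set.toFinite N)

lemma class_disjoint {N : Set V} {g : V → α} {a b : α} (hab : a ≠ b) :
    Disjoint {w | w ∈ N ∧ g w = a} {w | w ∈ N ∧ g w = b} :=
  Set.disjoint_left.mpr fun {w} hwa hwb => hab ((hwa.2).symm.trans hwb.2)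

lemma cover2 {A B N : Set V} (hA : A ⊆ N) (hB : B ⊆ N) (hAB : Disjoint A B)
    (hcard : N.ncard ≤ A.ncard + B.ncard) : ∀ w ∈ N, w ∈ A ∨ w ∈ B := by
  have := Set.eq_of_subset_of_ncard_le (Set.union_subset hA hB)
    (by rw [Set.ncard_union_eq hAB (Set.toFinite A) (Set.toFinite B)]; exact hcard)
    (Set.toFinite N)
  intro w hw
  rw [← this] at hw
  exact hw

lemma cover3 {A B C N : Set V} (hA : A ⊆ N) (hB : B ⊆ N) (hC : C ⊆ N)
    (hAB : Disjoint A B) (hAC : Disjoint A C) (hBC : Disjoint B C)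
    (hcard : N.ncard ≤ A.ncard + B.ncard + C.ncard) : ∀ w ∈ N, w ∈ A ∨ w ∈ B ∨ w ∈ C := by
  have h1 : (A ∪ B).ncard = A.ncard + B.ncard :=
    Set.ncard_union_eq hAB (Set.toFinite A) (Set.toFinite B)
  have h2 : Disjoint (A ∪ B) C := Set.disjoint_union_left.mpr ⟨hAC, hBC⟩
  have := Set.eq_of_subset_of_ncard_le (Set.union_subset (Set.union_subset hA hB) hC)
    (by rw [Set.ncard_union_eq h2 (Set.toFinite _) (Set.toFinite C), h1]; exact hcard)
    (Set.toFinite N)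
  intro w hw
  rw [← this] at hw
  rcases hw with (h | h) | h
  · exact Or.inl h
  · exact Or.inr (Or.inl h)
  · exact Or.inr (Or.inr h)

lemma pigeon {N : Set V} {g : V → α} {L : Finset α} (hL : L.card = 3) (hN : N.ncard ≤ 5) :
    ∃ c ∈ L, ({w | w ∈ N ∧ g w = c} : Set V).ncard ≤ 1 := by
  classical
  obtain ⟨a, b, c, hab, hac, hbc, rfl⟩ := Finset.card_eq_three.mp hL
  by_contra h
  push_neg at h
  have ha := h a (by simp)
  have hb := h b (by simp)
  have hc := h c (by simp)
  have hsum := sum3_le (N := N)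
    (fun w hw => hw.1) (fun w hw => hw.1) (fun w hw => hw.1)
    (class_disjoint hab) (class_disjoint hac) (class_disjoint hbc)
    (A := {w | w ∈ N ∧ g w = a}) (B := {w | w ∈ N ∧ g w = b}) (C := {w | w ∈ N ∧ g w = c})
  omega

lemma third {L : Finset α} {c : α} (hL : L.card = 3) (hc : c ∈ L) :
    ∃ a b, a ≠ b ∧ a ≠ c ∧ b ≠ c ∧ a ∈ L ∧ b ∈ L := by
  classical
  obtain ⟨x, y, z, hxy, hxz, hyz, rfl⟩ := Finset.card_eq_three.mp hL
  simp only [Finset.mem_insert, Finset.mem_singleton] at hc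
  rcases hc with rfl | rfl | rfl
  · exact ⟨y, z, hyz, hxy.symm, hxz.symm, by simp, by simp⟩
  · exact ⟨x, z, hxz, hxy, hyz.symm, by simp, by simp⟩
  · exact ⟨x, y, hxy, hxz, hyz, by simp, by simp⟩

end ArbAux2


namespace ArbAux3
open ArbAux ArbAux2

variable {V : Type*} {α : Type*} [Fintype V]

lemma buildExt {G : SimpleGraph V} {L : V → Finset α} {f g : V → α} {S : Set V}
    {v1 v2 v3 v4 : V}
    (hS : S = {v1, v2, v3, v4})
    (hfL : ∀ x, x ∉ S → f x ∈ L x)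
    (hf : ArbAux.Arb G Sᶜ f)
    (hg : ∀ x, x ∉ S → g x = f x)
    (hg1 : g v1 ∈ L v1) (hg2 : g v2 ∈ L v2) (hg3 : g v3 ∈ L v3) (hg4 : g v4 ∈ L v4)
    (hc1 : {w | w ∈ Sᶜ ∧ G.Adj v1 w ∧ g w = g v1}.Subsingleton)
    (hc2 : {w | w ∈ insert v1 Sᶜ ∧ G.Adj v2 w ∧ g w = g v2}.Subsingleton)
    (hc3 : {w | w ∈ insert v2 (insert v1 Sᶜ) ∧ G.Adj v3 w ∧ g w = g v3}.Subsingleton)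
    (hc4 : {w | w ∈ insert v3 (insert v2 (insert v1 Sᶜ)) ∧ G.Adj v4 w ∧ g w = g v4}.Subsingleton) :
    (∀ x, g x ∈ L x) ∧ ArbColOn G Set.univ g ∧ ∀ x, x ∉ S → g x = f x := by
  have hbase : ArbAux.Arb G Sᶜ g :=
    arb_congr (fun x hx => hg x (by simpa using hx)) hf
  have h1 := ArbAux.arb_insert hbase hc1
  have h2 := ArbAux.arb_insert h1 hc2
  have h3 := ArbAux.arb_insert h2 hc3
  have h4 := ArbAux.arb_insert h3 hc4
  have huniv : insert v4 (insert v3 (insert v2 (insert v1 Sᶜ))) = Set.univ := by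
    apply Set.eq_univ_of_forall
    intro x
    by_cases hx : x ∈ S
    · rw [hS] at hx
      rcases hx with rfl | rfl | rfl | hx
      · exact Or.inr (Or.inr (Or.inr (Or.inl rfl)))
      · exact Or.inr (Or.inr (Or.inl rfl))
      · exact Or.inr (Or.inl rfl)
      · rw [Set.mem_singleton_iff] at hx
        exact Or.inl hx
    · exact Or.inr (Or.inr (Or.inr (Or.inr hx)))
  rw [huniv] at h4
  refine ⟨?_, arb_iff.mpr h4, hg⟩
  intro x
  by_cases hx : x ∈ S
  · rw [hS] at hx
    rcases hx with rfl | rfl | rfl | hx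
    · exact hg1
    · exact hg2
    · exact hg3
    · rw [Set.mem_singleton_iff] at hx
      exact hx ▸ hg4
  · rw [hg x hx]
    exact hfL x hx

end ArbAux3

section MainProof

set_option maxHeartbeats 2000000

theorem stmt_7 {V α : Type*} [Fintype V] (G : SimpleGraph V)
    (L : V → Finset α) (hL : ∀ x, (L x).card = 3)
    (u u₁ u₂ u₃ u₄ : V)
    (hdist : [u₁, u₂, u₃, u₄].Pairwise (· ≠ ·))
    (hnbr : G.neighborSet u = {u₁, u₂, u₃, u₄})
    (h12 : G.Adj u₁ u₂) (h23 : G.Adj u₂ u₃) (h34 : G.Adj u₃ u₄) (h41 : G.Adj u₄ u₁)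
    (hd1 : (G.neighborSet u₁).ncard ≤ 6) (hd2 : (G.neighborSet u₂).ncard ≤ 7)
    (hd3 : (G.neighborSet u₃).ncard ≤ 6)
    (f : V → α)
    (hfL : ∀ x, x ∉ ({u, u₁, u₂, u₃} : Set V) → f x ∈ L x)
    (hf : ArbColOn G ({u, u₁, u₂, u₃} : Set V)ᶜ f) :
    ∃ g₁ g₂ : V → α,
      ((∀ x, g₁ x ∈ L x) ∧ ArbColOn G Set.univ g₁ ∧
        ∀ x, x ∉ ({u, u₁, u₂, u₃} : Set V) → g₁ x = f x) ∧
      ((∀ x, g₂ x ∈ L x) ∧ ArbColOn G Set.univ g₂ ∧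
        ∀ x, x ∉ ({u, u₁, u₂, u₃} : Set V) → g₂ x = f x) ∧
      g₁ ≠ g₂ := by
  classical
  have hu1 : G.Adj u u₁ := by
    have h : u₁ ∈ G.neighborSet u := by rw [hnbr]; exact Or.inl rfl
    exact h
  have hu2 : G.Adj u u₂ := by
    have h : u₂ ∈ G.neighborSet u := by rw [hnbr]; exact Or.inr (Or.inl rfl)
    exact h
  have hu3 : G.Adj u u₃ := by
    have h : u₃ ∈ G.neighborSet u := by rw [hnbr]; exact Or.inr (Or.inr (Or.inl rfl))
    exact h
  have hu4 : G.Adj u u₄ := by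
    have h : u₄ ∈ G.neighborSet u := by rw [hnbr]; exact Or.inr (Or.inr (Or.inr rfl))
    exact h
  have d12 : u₁ ≠ u₂ := (List.pairwise_cons.mp hdist).1 u₂ (by simp)
  have d13 : u₁ ≠ u₃ := (List.pairwise_cons.mp hdist).1 u₃ (by simp)
  have d14 : u₁ ≠ u₄ := (List.pairwise_cons.mp hdist).1 u₄ (by simp)
  have hdist2 := (List.pairwise_cons.mp hdist).2
  have d23 : u₂ ≠ u₃ := (List.pairwise_cons.mp hdist2).1 u₃ (by simp)
  have d24 : u₂ ≠ u₄ := (List.pairwise_cons.mp hdist2).1 u₄ (by simp)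
  have hdist3 := (List.pairwise_cons.mp hdist2).2
  have d34 : u₃ ≠ u₄ := (List.pairwise_cons.mp hdist3).1 u₄ (by simp)
  have eu1 : u ≠ u₁ := hu1.ne
  have eu2 : u ≠ u₂ := hu2.ne
  have eu3 : u ≠ u₃ := hu3.ne
  have eu4 : u ≠ u₄ := hu4.ne
  set S : Set V := {u, u₁, u₂, u₃} with hS
  have hmemS : ∀ x, x ∈ S ↔ x = u ∨ x = u₁ ∨ x = u₂ ∨ x = u₃ := by
    intro x
    rw [hS]
    simp [Set.mem_insert_iff]
  have hnotS : ∀ x, x ∉ S → x ≠ u ∧ x ≠ u₁ ∧ x ≠ u₂ ∧ x ≠ u₃ := by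
    intro x hx
    refine ⟨?_, ?_, ?_, ?_⟩ <;>
      (intro h; exact hx ((hmemS x).mpr (by tauto)))
  have huS : u ∈ S := (hmemS u).mpr (Or.inl rfl)
  have hu1S : u₁ ∈ S := (hmemS u₁).mpr (Or.inr (Or.inl rfl))
  have hu2S : u₂ ∈ S := (hmemS u₂).mpr (Or.inr (Or.inr (Or.inl rfl)))
  have hu3S : u₃ ∈ S := (hmemS u₃).mpr (Or.inr (Or.inr (Or.inr rfl)))
  have hu4c : u₄ ∈ Sᶜ := by
    intro h
    rcases (hmemS u₄).mp h with h' | h' | h' | h'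
    · exact eu4 h'.symm
    · exact d14 h'.symm
    · exact d24 h'.symm
    · exact d34 h'.symm
  have hfArb : ArbAux.Arb G Sᶜ f := ArbAux.arb_iff.mp hf
  -- the "placed neighborhoods" at the four stages
  set N3 : Set V := {w | w ∈ Sᶜ ∧ G.Adj u₃ w} with hN3
  set N2 : Set V := {w | w ∈ insert u₃ Sᶜ ∧ G.Adj u₂ w} with hN2
  set N1 : Set V := {w | w ∈ insert u₂ (insert u₃ Sᶜ) ∧ G.Adj u₁ w} with hN1
  set NU : Set V := {w | w ∈ insert u₁ (insert u₂ (insert u₃ Sᶜ)) ∧ G.Adj u w} with hNU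
  have hN3b : N3.ncard ≤ 4 := by
    have hsub1 : ({u, u₂} : Set V) ⊆ G.neighborSet u₃ := by
      rintro w (rfl | hw)
      · exact hu3.symm
      · rw [Set.mem_singleton_iff] at hw; subst hw; exact h23.symm
    have hsub2 : N3 ⊆ G.neighborSet u₃ := fun w hw => hw.2
    have hdisj : Disjoint ({u, u₂} : Set V) N3 := Set.disjoint_left.mpr (by
      rintro w (rfl | hw) hwN
      · exact hwN.1 huS
      · rw [Set.mem_singleton_iff] at hw; subst hw; exact hwN.1 hu2S)
    have hsum := ArbAux2.sum2_le hsub1 hsub2 hdisj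
    rw [Set.ncard_pair eu2] at hsum
    omega
  have hN2b : N2.ncard ≤ 5 := by
    have hsub1 : ({u, u₁} : Set V) ⊆ G.neighborSet u₂ := by
      rintro w (rfl | hw)
      · exact hu2.symm
      · rw [Set.mem_singleton_iff] at hw; subst hw; exact h12.symm
    have hsub2 : N2 ⊆ G.neighborSet u₂ := fun w hw => hw.2
    have hdisj : Disjoint ({u, u₁} : Set V) N2 := Set.disjoint_left.mpr (by
      rintro w (rfl | hw) hwN
      · rcases hwN.1 with h | h
        · exact eu3 h
        · exact h huS
      · rw [Set.mem_singleton_iff] at hw; subst hw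
        rcases hwN.1 with h | h
        · exact d13 h
        · exact h hu1S)
    have hsum := ArbAux2.sum2_le hsub1 hsub2 hdisj
    rw [Set.ncard_pair eu1] at hsum
    omega
  have hN1b : N1.ncard ≤ 5 := by
    have hsub1 : ({u} : Set V) ⊆ G.neighborSet u₁ := by
      rintro w rfl
      exact hu1.symm
    have hsub2 : N1 ⊆ G.neighborSet u₁ := fun w hw => hw.2
    have hdisj : Disjoint ({u} : Set V) N1 := Set.disjoint_left.mpr (by
      rintro w rfl hwN
      rcases hwN.1 with h | h | h
      · exact eu2 h
      · exact eu3 h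
      · exact h huS)
    have hsum := ArbAux2.sum2_le hsub1 hsub2 hdisj
    rw [Set.ncard_singleton] at hsum
    omega
  have hm1NU : u₁ ∈ NU := ⟨Or.inl rfl, hu1⟩
  have hm2NU : u₂ ∈ NU := ⟨Or.inr (Or.inl rfl), hu2⟩
  have hm3NU : u₃ ∈ NU := ⟨Or.inr (Or.inr (Or.inl rfl)), hu3⟩
  have hm4NU : u₄ ∈ NU := ⟨Or.inr (Or.inr (Or.inr hu4c)), hu4⟩
  have hNUb : NU.ncard ≤ 4 := by
    have hNUeq : NU ⊆ {u₁, u₂, u₃, u₄} := by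
      rintro w ⟨hw, hadj⟩
      have h : w ∈ G.neighborSet u := hadj
      rw [hnbr] at h
      exact h
    have h4 : ({u₁, u₂, u₃, u₄} : Set V).ncard = 4 := by
      rw [Set.ncard_insert_of_notMem (by simp [d12, d13, d14]) (Set.toFinite _),
        Set.ncard_insert_of_notMem (by simp [d23, d24]) (Set.toFinite _),
        Set.ncard_pair d34]
    calc NU.ncard ≤ ({u₁, u₂, u₃, u₄} : Set V).ncard :=
          Set.ncard_le_ncard hNUeq (Set.toFinite _)
      _ = 4 := h4
  have hNUmem : ∀ w ∈ NU, w = u₁ ∨ w = u₂ ∨ w = u₃ ∨ w = u₄ := by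
    rintro w ⟨hw, hadj⟩
    have h : w ∈ G.neighborSet u := hadj
    rw [hnbr] at h
    rcases h with h | h | h | h
    · exact Or.inl h
    · exact Or.inr (Or.inl h)
    · exact Or.inr (Or.inr (Or.inl h))
    · exact Or.inr (Or.inr (Or.inr h))
  -- master: build an extension from safe choices along the order (u₃,u₂,u₁,u)
  have EXT : ∀ d3 d2 d1 d0 : α, d3 ∈ L u₃ → d2 ∈ L u₂ → d1 ∈ L u₁ → d0 ∈ L u →
      ({w | w ∈ N3 ∧ f w = d3} : Set V).ncard ≤ 1 →
      ({w | w ∈ N2 ∧ Function.update f u₃ d3 w = d2} : Set V).ncard ≤ 1 →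
      ({w | w ∈ N1 ∧ Function.update (Function.update f u₃ d3) u₂ d2 w = d1} : Set V).ncard ≤ 1 →
      ({w | w ∈ NU ∧
        Function.update (Function.update (Function.update f u₃ d3) u₂ d2) u₁ d1 w = d0} :
          Set V).ncard ≤ 1 →
      ∃ g : V → α, ((∀ x, g x ∈ L x) ∧ ArbColOn G Set.univ g ∧ ∀ x, x ∉ S → g x = f x) ∧
        g u₃ = d3 ∧ g u₂ = d2 ∧ g u₁ = d1 ∧ g u = d0 := by
    intro d3 d2 d1 d0 h3L h2L h1L h0L k3 k2 k1 k0
    set p3 := Function.update f u₃ d3 with hp3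
    set p2 := Function.update p3 u₂ d2 with hp2
    set p1 := Function.update p2 u₁ d1 with hp1
    set p0 := Function.update p1 u d0 with hp0
    have v3 : p0 u₃ = d3 := by
      rw [hp0, Function.update_of_ne eu3.symm, hp1, Function.update_of_ne d13.symm,
        hp2, Function.update_of_ne d23.symm, hp3, Function.update_self]
    have v2 : p0 u₂ = d2 := by
      rw [hp0, Function.update_of_ne eu2.symm, hp1, Function.update_of_ne d12.symm,
        hp2, Function.update_self]
    have v1 : p0 u₁ = d1 := by
      rw [hp0, Function.update_of_ne eu1.symm, hp1, Function.update_self]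
    have v0 : p0 u = d0 := by
      rw [hp0, Function.update_self]
    have hp0f : ∀ x, x ∉ S → p0 x = f x := by
      intro x hx
      obtain ⟨n0, n1, n2, n3⟩ := hnotS x hx
      rw [hp0, Function.update_of_ne n0, hp1, Function.update_of_ne n1,
        hp2, Function.update_of_ne n2, hp3, Function.update_of_ne n3]
    have heqB : ∀ w, w ∈ insert u₃ Sᶜ → p0 w = p3 w := by
      rintro w (rfl | hw)
      · rw [v3, hp3, Function.update_self]
      · rw [hp0f w hw, hp3, Function.update_of_ne (hnotS w hw).2.2.2]
    have heqC : ∀ w, w ∈ insert u₂ (insert u₃ Sᶜ) → p0 w = p2 w := by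
      rintro w (rfl | hw)
      · rw [v2, hp2, Function.update_self]
      · rw [heqB w hw, hp2]
        rcases hw with rfl | hw'
        · rw [Function.update_of_ne d23.symm]
        · rw [Function.update_of_ne (hnotS w hw').2.2.1]
    have heqD : ∀ w, w ∈ insert u₁ (insert u₂ (insert u₃ Sᶜ)) → p0 w = p1 w := by
      rintro w (rfl | hw)
      · rw [v1, hp1, Function.update_self]
      · rw [heqC w hw, hp1]
        rcases hw with rfl | rfl | hw'
        · rw [Function.update_of_ne d12.symm]
        · rw [Function.update_of_ne d13.symm]
        · rw [Function.update_of_ne (hnotS w hw').2.1]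
    have hSeq : S = {u₃, u₂, u₁, u} := by
      rw [hS]
      ext x
      simp only [Set.mem_insert_iff, Set.mem_singleton_iff]
      tauto
    refine ⟨p0, ArbAux3.buildExt hSeq hfL hfArb hp0f
      (by rw [v3]; exact h3L) (by rw [v2]; exact h2L)
      (by rw [v1]; exact h1L) (by rw [v0]; exact h0L)
      ?_ ?_ ?_ ?_, v3, v2, v1, v0⟩
    · apply ArbAux2.subs_of_ncard_le_one
      refine le_trans (Set.ncard_le_ncard ?_ (Set.toFinite _)) k3
      rintro w ⟨hw, hadj, hval⟩
      exact ⟨⟨hw, hadj⟩, by rw [← hp0f w hw, hval, v3]⟩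
    · apply ArbAux2.subs_of_ncard_le_one
      refine le_trans (Set.ncard_le_ncard ?_ (Set.toFinite _)) k2
      rintro w ⟨hw, hadj, hval⟩
      exact ⟨⟨hw, hadj⟩, by rw [← heqB w hw, hval, v2]⟩
    · apply ArbAux2.subs_of_ncard_le_one
      refine le_trans (Set.ncard_le_ncard ?_ (Set.toFinite _)) k1
      rintro w ⟨hw, hadj, hval⟩
      exact ⟨⟨hw, hadj⟩, by rw [← heqC w hw, hval, v1]⟩
    · apply ArbAux2.subs_of_ncard_le_one
      refine le_trans (Set.ncard_le_ncard ?_ (Set.toFinite _)) k0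
      rintro w ⟨hw, hadj, hval⟩
      exact ⟨⟨hw, hadj⟩, by rw [← heqD w hw, hval, v0]⟩
  -- complete an extension from a safe choice at u₃
  have EXT3 : ∀ d3, d3 ∈ L u₃ → ({w | w ∈ N3 ∧ f w = d3} : Set V).ncard ≤ 1 →
      ∃ g : V → α, ((∀ x, g x ∈ L x) ∧ ArbColOn G Set.univ g ∧ ∀ x, x ∉ S → g x = f x) ∧
        g u₃ = d3 := by
    intro d3 h3L k3
    obtain ⟨d2, h2L, k2⟩ :=
      ArbAux2.pigeon (N := N2) (g := Function.update f u₃ d3) (hL u₂) hN2b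
    obtain ⟨d1, h1L, k1⟩ :=
      ArbAux2.pigeon (N := N1) (g := Function.update (Function.update f u₃ d3) u₂ d2)
        (hL u₁) hN1b
    obtain ⟨d0, h0L, k0⟩ :=
      ArbAux2.pigeon (N := NU)
        (g := Function.update (Function.update (Function.update f u₃ d3) u₂ d2) u₁ d1)
        (hL u) (le_trans hNUb (by norm_num))
    obtain ⟨g, hp, hv3, _, _, _⟩ := EXT d3 d2 d1 d0 h3L h2L h1L h0L k3 k2 k1 k0
    exact ⟨g, hp, hv3⟩
  -- first pigeonhole at u₃
  obtain ⟨c3, hc3L, hc3K⟩ := ArbAux2.pigeon (N := N3) (g := f) (hL u₃)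
    (le_trans hN3b (by norm_num))
  by_cases H3 : ∃ d ∈ L u₃, ∃ d' ∈ L u₃, d ≠ d' ∧
      ({w | w ∈ N3 ∧ f w = d} : Set V).ncard ≤ 1 ∧
      ({w | w ∈ N3 ∧ f w = d'} : Set V).ncard ≤ 1
  · obtain ⟨d, hdL, d', hd'L, hdd, kd, kd'⟩ := H3
    obtain ⟨g1, hp1, hv1⟩ := EXT3 d hdL kd
    obtain ⟨g2, hp2, hv2⟩ := EXT3 d' hd'L kd'
    exact ⟨g1, g2, hp1, hp2, fun h => hdd (by rw [← hv1, ← hv2, h])⟩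
  -- forced at u₃
  have hforce3 : ∀ e ∈ L u₃, e ≠ c3 → 2 ≤ ({w | w ∈ N3 ∧ f w = e} : Set V).ncard := by
    intro e heL hene
    by_contra hlt
    exact H3 ⟨e, heL, c3, hc3L, hene, by omega, hc3K⟩
  obtain ⟨a3, b3, hab3, hac3, hbc3, ha3L, hb3L⟩ := ArbAux2.third (hL u₃) hc3L
  have ha3 := hforce3 a3 ha3L hac3
  have hb3 := hforce3 b3 hb3L hbc3
  have hsub3a : {w | w ∈ N3 ∧ f w = a3} ⊆ N3 := fun w hw => hw.1
  have hsub3b : {w | w ∈ N3 ∧ f w = b3} ⊆ N3 := fun w hw => hw.1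
  have hsub3c : {w | w ∈ N3 ∧ f w = c3} ⊆ N3 := fun w hw => hw.1
  have hsum3 := ArbAux2.sum3_le hsub3a hsub3b hsub3c
    (ArbAux2.class_disjoint hab3) (ArbAux2.class_disjoint hac3) (ArbAux2.class_disjoint hbc3)
  have hpair3 := ArbAux2.sum2_le hsub3a hsub3b (ArbAux2.class_disjoint hab3)
  have hcls3empty : {w | w ∈ N3 ∧ f w = c3} = ∅ :=
    (Set.ncard_eq_zero (Set.toFinite _)).mp (by omega)
  have hcov3 := ArbAux2.cover2 hsub3a hsub3b (ArbAux2.class_disjoint hab3) (by omega)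
  have hu4N3 : u₄ ∈ N3 := ⟨hu4c, h34⟩
  have htc3 : f u₄ ≠ c3 := by
    rcases hcov3 u₄ hu4N3 with h | h
    · rw [h.2]; exact hac3
    · rw [h.2]; exact hbc3
  have hnd : ¬ G.Adj u₁ u₃ := by
    intro hadj
    have hsub1 : ({u, u₂, u₁} : Set V) ⊆ G.neighborSet u₃ := by
      rintro w (rfl | rfl | hw)
      · exact hu3.symm
      · exact h23.symm
      · rw [Set.mem_singleton_iff] at hw; subst hw; exact hadj.symm
    have hdisj : Disjoint ({u, u₂, u₁} : Set V) N3 := Set.disjoint_left.mpr (by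
      rintro w (rfl | rfl | hw) hwN
      · exact hwN.1 huS
      · exact hwN.1 hu2S
      · rw [Set.mem_singleton_iff] at hw; subst hw; exact hwN.1 hu1S)
    have hsum := ArbAux2.sum2_le hsub1 (fun w hw => hw.2) hdisj
    have h3 : ({u, u₂, u₁} : Set V).ncard = 3 := by
      rw [Set.ncard_insert_of_notMem (by simp [eu2, eu1]) (Set.toFinite _),
        Set.ncard_pair (fun h => d12 h.symm)]
    rw [h3] at hsum
    omega
  -- stage 2 choice
  obtain ⟨c2, hc2L, hc2K⟩ :=
    ArbAux2.pigeon (N := N2) (g := Function.update f u₃ c3) (hL u₂) hN2b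
  by_cases H1 : ∃ d ∈ L u₁, ∃ d' ∈ L u₁, d ≠ d' ∧
      ({w | w ∈ N1 ∧ Function.update (Function.update f u₃ c3) u₂ c2 w = d} : Set V).ncard ≤ 1 ∧
      ({w | w ∈ N1 ∧ Function.update (Function.update f u₃ c3) u₂ c2 w = d'} : Set V).ncard ≤ 1
  · obtain ⟨d, hdL, d', hd'L, hdd, kd, kd'⟩ := H1
    obtain ⟨e0, he0L, ke0⟩ := ArbAux2.pigeon (N := NU)
      (g := Function.update (Function.update (Function.update f u₃ c3) u₂ c2) u₁ d)
      (hL u) (le_trans hNUb (by norm_num))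
    obtain ⟨e0', he0'L, ke0'⟩ := ArbAux2.pigeon (N := NU)
      (g := Function.update (Function.update (Function.update f u₃ c3) u₂ c2) u₁ d')
      (hL u) (le_trans hNUb (by norm_num))
    obtain ⟨g1, hp1, _, _, hv1, _⟩ := EXT c3 c2 d e0 hc3L hc2L hdL he0L hc3K hc2K kd ke0
    obtain ⟨g2, hp2, _, _, hv2, _⟩ := EXT c3 c2 d' e0' hc3L hc2L hd'L he0'L hc3K hc2K kd' ke0'
    exact ⟨g1, g2, hp1, hp2, fun h => hdd (by rw [← hv1, ← hv2, h])⟩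
  -- forced at u₁
  obtain ⟨c1, hc1L, hc1K⟩ :=
    ArbAux2.pigeon (N := N1) (g := Function.update (Function.update f u₃ c3) u₂ c2)
      (hL u₁) hN1b
  have hforce1 : ∀ e ∈ L u₁, e ≠ c1 →
      2 ≤ ({w | w ∈ N1 ∧ Function.update (Function.update f u₃ c3) u₂ c2 w = e} :
        Set V).ncard := by
    intro e heL hene
    by_contra hlt
    exact H1 ⟨e, heL, c1, hc1L, hene, by omega, hc1K⟩
  by_cases HU : ∃ d ∈ L u, ∃ d' ∈ L u, d ≠ d' ∧
      ({w | w ∈ NU ∧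
        Function.update (Function.update (Function.update f u₃ c3) u₂ c2) u₁ c1 w = d} :
          Set V).ncard ≤ 1 ∧
      ({w | w ∈ NU ∧
        Function.update (Function.update (Function.update f u₃ c3) u₂ c2) u₁ c1 w = d'} :
          Set V).ncard ≤ 1
  · obtain ⟨d, hdL, d', hd'L, hdd, kd, kd'⟩ := HU
    obtain ⟨g1, hp1, _, _, _, hv1⟩ := EXT c3 c2 c1 d hc3L hc2L hc1L hdL hc3K hc2K hc1K kd
    obtain ⟨g2, hp2, _, _, _, hv2⟩ := EXT c3 c2 c1 d' hc3L hc2L hc1L hd'L hc3K hc2K hc1K kd'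
    exact ⟨g1, g2, hp1, hp2, fun h => hdd (by rw [← hv1, ← hv2, h])⟩
  -- forced at u
  obtain ⟨cu, hcuL, hcuK⟩ :=
    ArbAux2.pigeon (N := NU)
      (g := Function.update (Function.update (Function.update f u₃ c3) u₂ c2) u₁ c1)
      (hL u) (le_trans hNUb (by norm_num))
  set q1 := Function.update (Function.update (Function.update f u₃ c3) u₂ c2) u₁ c1 with hq1
  have hforceU : ∀ e ∈ L u, e ≠ cu → 2 ≤ ({w | w ∈ NU ∧ q1 w = e} : Set V).ncard := by
    intro e heL hene
    by_contra hlt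
    exact HU ⟨e, heL, cu, hcuL, hene, by omega, hcuK⟩
  obtain ⟨au, bu, habu, hacu, hbcu, hauL, hbuL⟩ := ArbAux2.third (hL u) hcuL
  have hau := hforceU au hauL hacu
  have hbu := hforceU bu hbuL hbcu
  have hsubUa : {w | w ∈ NU ∧ q1 w = au} ⊆ NU := fun w hw => hw.1
  have hsubUb : {w | w ∈ NU ∧ q1 w = bu} ⊆ NU := fun w hw => hw.1
  have hsubUc : {w | w ∈ NU ∧ q1 w = cu} ⊆ NU := fun w hw => hw.1
  have hsumU := ArbAux2.sum3_le hsubUa hsubUb hsubUc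
    (ArbAux2.class_disjoint habu) (ArbAux2.class_disjoint hacu) (ArbAux2.class_disjoint hbcu)
  have hKau : ({w | w ∈ NU ∧ q1 w = au} : Set V).ncard = 2 := by omega
  have hKbu : ({w | w ∈ NU ∧ q1 w = bu} : Set V).ncard = 2 := by omega
  have hKcu : ({w | w ∈ NU ∧ q1 w = cu} : Set V).ncard = 0 := by omega
  have hcovU := ArbAux2.cover2 hsubUa hsubUb (ArbAux2.class_disjoint habu) (by omega)
  -- values of q1
  have hq1u1 : q1 u₁ = c1 := by rw [hq1, Function.update_self]
  have hq1u2 : q1 u₂ = c2 := by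
    rw [hq1, Function.update_of_ne d12.symm, Function.update_self]
  have hq1u3 : q1 u₃ = c3 := by
    rw [hq1, Function.update_of_ne d13.symm, Function.update_of_ne d23.symm,
      Function.update_self]
  have hq1u4 : q1 u₄ = f u₄ := by
    rw [hq1, Function.update_of_ne d14.symm, Function.update_of_ne d24.symm,
      Function.update_of_ne d34.symm]
  -- the greedy extension
  obtain ⟨g1, hp1, hg1u3, hg1u2, hg1u1, hg1u⟩ :=
    EXT c3 c2 c1 cu hc3L hc2L hc1L hcuL hc3K hc2K hc1K hcuK
  have hg1f : ∀ x, x ∉ S → g1 x = f x := hp1.2.2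
  -- count of the color f u₄ in NU is 2
  have hKt2 : ({w | w ∈ NU ∧ q1 w = f u₄} : Set V).ncard = 2 := by
    rcases hcovU u₄ hm4NU with h | h
    · have ht : f u₄ = au := hq1u4 ▸ h.2
      rw [ht]; exact hKau
    · have ht : f u₄ = bu := hq1u4 ▸ h.2
      rw [ht]; exact hKbu
  have ht4U : f u₄ = au ∨ f u₄ = bu := by
    rcases hcovU u₄ hm4NU with h | h
    · exact Or.inl (hq1u4 ▸ h.2)
    · exact Or.inr (hq1u4 ▸ h.2)
  have hc1ab : c1 = au ∨ c1 = bu := by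
    rcases hcovU u₁ hm1NU with h | h
    · exact Or.inl (hq1u1 ▸ h.2)
    · exact Or.inr (hq1u1 ▸ h.2)
  have hc3ab : c3 = au ∨ c3 = bu := by
    rcases hcovU u₃ hm3NU with h | h
    · exact Or.inl (hq1u3 ▸ h.2)
    · exact Or.inr (hq1u3 ▸ h.2)
  by_cases hc2t : c2 = f u₄
  · -- case A : u₂ pairs with u₄; then c1 = c3 = m and recoloring u with m works
    have hc1t : c1 ≠ f u₄ := by
      intro h
      have h1 : u₁ ∈ {w | w ∈ NU ∧ q1 w = f u₄} := ⟨hm1NU, by rw [hq1u1, h]⟩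
      have h2 : u₂ ∈ {w | w ∈ NU ∧ q1 w = f u₄} := ⟨hm2NU, by rw [hq1u2, hc2t]⟩
      have h4 : u₄ ∈ {w | w ∈ NU ∧ q1 w = f u₄} := ⟨hm4NU, hq1u4⟩
      have h3le := ArbAux2.three_le_ncard d12 d14 d24 h1 h2 h4
      omega
    have hm : ∃ m, m ∈ L u ∧ m ≠ f u₄ ∧ c1 = m ∧ c3 = m ∧
        ({w | w ∈ NU ∧ q1 w = m} : Set V).ncard = 2 := by
      rcases ht4U with ht | ht
      · refine ⟨bu, hbuL, by rw [ht]; exact habu.symm, ?_, ?_, hKbu⟩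
        · rcases hc1ab with h | h
          · exact absurd (h.trans ht.symm) hc1t
          · exact h
        · rcases hc3ab with h | h
          · exact absurd (ht.trans h.symm) htc3
          · exact h
      · refine ⟨au, hauL, by rw [ht]; exact habu, ?_, ?_, hKau⟩
        · rcases hc1ab with h | h
          · exact h
          · exact absurd (h.trans ht.symm) hc1t
        · rcases hc3ab with h | h
          · exact h
          · exact absurd (ht.trans h.symm) htc3
    obtain ⟨m, hmL, hmt, hc1m, hc3m, hKm⟩ := hm
    set gA := Function.update g1 u m with hgAdef
    have hgAu : gA u = m := by rw [hgAdef, Function.update_self]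
    have hgAu1 : gA u₁ = c1 := by rw [hgAdef, Function.update_of_ne eu1.symm]; exact hg1u1
    have hgAu2 : gA u₂ = c2 := by rw [hgAdef, Function.update_of_ne eu2.symm]; exact hg1u2
    have hgAu3 : gA u₃ = c3 := by rw [hgAdef, Function.update_of_ne eu3.symm]; exact hg1u3
    have hgAf : ∀ x, x ∉ S → gA x = f x := by
      intro x hx
      rw [hgAdef, Function.update_of_ne (hnotS x hx).1]
      exact hg1f x hx
    have hSeqA : S = {u₁, u, u₃, u₂} := by
      rw [hS]; ext x
      simp only [Set.mem_insert_iff, Set.mem_singleton_iff]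
      constructor
      · rintro (h | h | h | h)
        exacts [Or.inr (Or.inl h), Or.inl h, Or.inr (Or.inr (Or.inr h)),
          Or.inr (Or.inr (Or.inl h))]
      · rintro (h | h | h | h)
        exacts [Or.inr (Or.inl h), Or.inl h, Or.inr (Or.inr (Or.inr h)),
          Or.inr (Or.inr (Or.inl h))]
    have hmc2 : m ≠ c2 := by rw [hc2t]; exact hmt
    have hpA : (∀ x, gA x ∈ L x) ∧ ArbColOn G Set.univ gA ∧ ∀ x, x ∉ S → gA x = f x := by
      refine ArbAux3.buildExt (G := G) (L := L) (f := f) (g := gA) hSeqA hfL hfArb hgAf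
        (by rw [hgAu1]; exact hc1L) (by rw [hgAu]; exact hmL)
        (by rw [hgAu3]; exact hc3L) (by rw [hgAu2]; exact hc2L)
        ?_ ?_ ?_ ?_
      · apply ArbAux2.subs_of_ncard_le_one
        refine le_trans (Set.ncard_le_ncard ?_ (Set.toFinite _)) hc1K
        rintro w ⟨hw, hadj, hval⟩
        obtain ⟨n0, n1, n2, n3⟩ := hnotS w hw
        refine ⟨⟨Or.inr (Or.inr hw), hadj⟩, ?_⟩
        rw [Function.update_of_ne n2, Function.update_of_ne n3, ← hgAf w hw, hval, hgAu1]
      · refine Set.Subsingleton.anti Set.subsingleton_singleton (t := ({u₁} : Set V)) ?_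
        rintro w ⟨hwm, hadj, hval⟩
        have hw4 : w ∈ G.neighborSet u := hadj
        rw [hnbr] at hw4
        rcases hw4 with rfl | rfl | rfl | h4
        · rfl
        · rcases hwm with h | h
          · exact absurd h d12.symm
          · exact absurd hu2S h
        · rcases hwm with h | h
          · exact absurd h d13.symm
          · exact absurd hu3S h
        · rw [Set.mem_singleton_iff] at h4
          rw [h4] at hval
          exact absurd (by rw [← hgAf u₄ hu4c, hval, hgAu] : f u₄ = m) hmt.symm
      · refine Set.Subsingleton.anti Set.subsingleton_singleton (t := ({u} : Set V)) ?_
        rintro w ⟨hwm, hadj, hval⟩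
        rcases hwm with rfl | rfl | hw
        · rfl
        · exact absurd hadj.symm hnd
        · exfalso
          have hwmem : w ∈ {w | w ∈ N3 ∧ f w = c3} :=
            ⟨⟨hw, hadj⟩, by rw [← hgAf w hw, hval, hgAu3]⟩
          rw [hcls3empty] at hwmem
          exact hwmem
      · apply ArbAux2.subs_of_ncard_le_one
        refine le_trans (Set.ncard_le_ncard ?_ (Set.toFinite _)) hc2K
        rintro w ⟨hwm, hadj, hval⟩
        rcases hwm with rfl | rfl | rfl | hw
        · exact absurd (by rw [← hc3m, ← hgAu3, hval, hgAu2]) hmc2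
        · exact absurd (by rw [← hgAu, hval, hgAu2]) hmc2
        · exact absurd (by rw [← hc1m, ← hgAu1, hval, hgAu2]) hmc2
        · obtain ⟨n0, n1, n2, n3⟩ := hnotS w hw
          refine ⟨⟨Or.inr hw, hadj⟩, ?_⟩
          rw [Function.update_of_ne n3, ← hgAf w hw, hval, hgAu2]
    have hmcu : m ≠ cu := by
      intro h
      rw [h] at hKm
      omega
    exact ⟨g1, gA, hp1, hpA, fun h => hmcu (by rw [← hgAu, ← h]; exact hg1u)⟩
  · -- case B : u₁ pairs with u₄ (c1 = f u₄), c2 = c3 = m; recolor u₁ with m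
    have hc1t : c1 = f u₄ := by
      by_contra hne
      have hsubt : {w | w ∈ NU ∧ q1 w = f u₄} ⊆ {u₄} := by
        rintro w ⟨hwNU, hwval⟩
        rcases hNUmem w hwNU with rfl | rfl | rfl | h4
        · rw [hq1u1] at hwval; exact absurd hwval hne
        · rw [hq1u2] at hwval; exact absurd hwval hc2t
        · rw [hq1u3] at hwval; exact absurd hwval.symm htc3
        · exact h4
      have hle := Set.ncard_le_ncard hsubt (Set.toFinite _)
      rw [Set.ncard_singleton] at hle
      omega
    have hc2ab : c2 = au ∨ c2 = bu := by
      rcases hcovU u₂ hm2NU with h | h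
      · exact Or.inl (hq1u2 ▸ h.2)
      · exact Or.inr (hq1u2 ▸ h.2)
    have hm : ∃ m, m ∈ L u ∧ m ≠ f u₄ ∧ c2 = m ∧ c3 = m ∧
        ({w | w ∈ NU ∧ q1 w = m} : Set V).ncard = 2 := by
      rcases ht4U with ht | ht
      · refine ⟨bu, hbuL, by rw [ht]; exact habu.symm, ?_, ?_, hKbu⟩
        · rcases hc2ab with h | h
          · exact absurd (h.trans ht.symm) hc2t
          · exact h
        · rcases hc3ab with h | h
          · exact absurd (ht.trans h.symm) htc3
          · exact h
      · refine ⟨au, hauL, by rw [ht]; exact habu, ?_, ?_, hKau⟩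
        · rcases hc2ab with h | h
          · exact h
          · exact absurd (h.trans ht.symm) hc2t
        · rcases hc3ab with h | h
          · exact h
          · exact absurd (ht.trans h.symm) htc3
    obtain ⟨m, hmL, hmt, hc2m, hc3m, hKm⟩ := hm
    -- forced structure at u₁
    obtain ⟨a1, b1, hab1, hac1, hbc1, ha1L, hb1L⟩ := ArbAux2.third (hL u₁) hc1L
    have ha1 := hforce1 a1 ha1L hac1
    have hb1 := hforce1 b1 hb1L hbc1
    set q2 := Function.update (Function.update f u₃ c3) u₂ c2 with hq2
    have hsub1a : {w | w ∈ N1 ∧ q2 w = a1} ⊆ N1 := fun w hw => hw.1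
    have hsub1b : {w | w ∈ N1 ∧ q2 w = b1} ⊆ N1 := fun w hw => hw.1
    have hsub1c : {w | w ∈ N1 ∧ q2 w = c1} ⊆ N1 := fun w hw => hw.1
    have hu4N1 : u₄ ∈ N1 := ⟨Or.inr (Or.inr hu4c), h41.symm⟩
    have hq2u4 : q2 u₄ = f u₄ := by
      rw [hq2, Function.update_of_ne d24.symm, Function.update_of_ne d34.symm]
    have hu4cls : u₄ ∈ {w | w ∈ N1 ∧ q2 w = c1} := ⟨hu4N1, by rw [hq2u4, hc1t]⟩
    have h1pos : 1 ≤ ({w | w ∈ N1 ∧ q2 w = c1} : Set V).ncard := by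
      have := (Set.ncard_pos (Set.toFinite _)).mpr ⟨u₄, hu4cls⟩
      omega
    have hsum1 := ArbAux2.sum3_le hsub1a hsub1b hsub1c
      (ArbAux2.class_disjoint hab1) (ArbAux2.class_disjoint hac1)
      (ArbAux2.class_disjoint hbc1)
    have hKa1 : ({w | w ∈ N1 ∧ q2 w = a1} : Set V).ncard = 2 := by omega
    have hKb1 : ({w | w ∈ N1 ∧ q2 w = b1} : Set V).ncard = 2 := by omega
    have hcov1 := ArbAux2.cover3 hsub1a hsub1b hsub1c
      (ArbAux2.class_disjoint hab1) (ArbAux2.class_disjoint hac1)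
      (ArbAux2.class_disjoint hbc1) (by omega)
    have hu2N1 : u₂ ∈ N1 := ⟨Or.inl rfl, h12⟩
    have hq2u2 : q2 u₂ = c2 := by rw [hq2, Function.update_self]
    have hm1 : m ∈ L u₁ ∧ ({w | w ∈ N1 ∧ q2 w = m} : Set V).ncard = 2 := by
      rcases hcov1 u₂ hu2N1 with h | h | h
      · have hme : m = a1 := by rw [← hc2m, ← hq2u2]; exact h.2
        exact ⟨by rw [hme]; exact ha1L, by rw [hme]; exact hKa1⟩
      · have hme : m = b1 := by rw [← hc2m, ← hq2u2]; exact h.2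
        exact ⟨by rw [hme]; exact hb1L, by rw [hme]; exact hKb1⟩
      · exfalso
        have hcc : c2 = c1 := by rw [← hq2u2]; exact h.2
        exact hc2t (hcc.trans hc1t)
    obtain ⟨hmL1, hKm1⟩ := hm1
    have he1 : ({w | w ∈ Sᶜ ∧ G.Adj u₁ w ∧ f w = m} : Set V).ncard ≤ 1 := by
      have hins : insert u₂ {w | w ∈ Sᶜ ∧ G.Adj u₁ w ∧ f w = m} ⊆
          {w | w ∈ N1 ∧ q2 w = m} := by
        rintro w (rfl | ⟨hw, hadj, hval⟩)
        · exact ⟨hu2N1, by rw [hq2u2]; exact hc2m⟩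
        · obtain ⟨n0, n1, n2, n3⟩ := hnotS w hw
          refine ⟨⟨Or.inr (Or.inr hw), hadj⟩, ?_⟩
          rw [hq2, Function.update_of_ne n2, Function.update_of_ne n3]
          exact hval
      have hnm : u₂ ∉ {w | w ∈ Sᶜ ∧ G.Adj u₁ w ∧ f w = m} := fun h => h.1 hu2S
      have hle := Set.ncard_le_ncard hins (Set.toFinite _)
      rw [Set.ncard_insert_of_notMem hnm (Set.toFinite _)] at hle
      omega
    have hcls2empty : {w | w ∈ Sᶜ ∧ G.Adj u₂ w ∧ f w = c2} = ∅ := by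
      have hu3cls : u₃ ∈ {w | w ∈ N2 ∧ Function.update f u₃ c3 w = c2} :=
        ⟨⟨Or.inl rfl, h23⟩, by rw [Function.update_self, hc3m]; exact hc2m.symm⟩
      have hins : insert u₃ {w | w ∈ Sᶜ ∧ G.Adj u₂ w ∧ f w = c2} ⊆
          {w | w ∈ N2 ∧ Function.update f u₃ c3 w = c2} := by
        rintro w (rfl | ⟨hw, hadj, hval⟩)
        · exact hu3cls
        · refine ⟨⟨Or.inr hw, hadj⟩, ?_⟩
          rw [Function.update_of_ne (hnotS w hw).2.2.2]
          exact hval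
      have hnm : u₃ ∉ {w | w ∈ Sᶜ ∧ G.Adj u₂ w ∧ f w = c2} := fun h => h.1 hu3S
      have hle := Set.ncard_le_ncard hins (Set.toFinite _)
      rw [Set.ncard_insert_of_notMem hnm (Set.toFinite _)] at hle
      exact (Set.ncard_eq_zero (Set.toFinite _)).mp (by omega)
    have hcut : cu ≠ f u₄ := by
      intro h
      rw [h] at hKcu
      omega
    have hmcu : m ≠ cu := by
      intro h
      rw [h] at hKm
      omega
    set gB := Function.update g1 u₁ m with hgBdef
    have hgBu1 : gB u₁ = m := by rw [hgBdef, Function.update_self]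
    have hgBu2 : gB u₂ = c2 := by
      rw [hgBdef, Function.update_of_ne d12.symm]; exact hg1u2
    have hgBu3 : gB u₃ = c3 := by
      rw [hgBdef, Function.update_of_ne d13.symm]; exact hg1u3
    have hgBu : gB u = cu := by
      rw [hgBdef, Function.update_of_ne eu1]; exact hg1u
    have hgBf : ∀ x, x ∉ S → gB x = f x := by
      intro x hx
      rw [hgBdef, Function.update_of_ne (hnotS x hx).2.1]
      exact hg1f x hx
    have hSeqB : S = {u₁, u₂, u₃, u} := by
      rw [hS]; ext x
      simp only [Set.mem_insert_iff, Set.mem_singleton_iff]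
      constructor
      · rintro (h | h | h | h)
        exacts [Or.inr (Or.inr (Or.inr h)), Or.inl h, Or.inr (Or.inl h),
          Or.inr (Or.inr (Or.inl h))]
      · rintro (h | h | h | h)
        exacts [Or.inr (Or.inl h), Or.inr (Or.inr (Or.inl h)),
          Or.inr (Or.inr (Or.inr h)), Or.inl h]
    have hpB : (∀ x, gB x ∈ L x) ∧ ArbColOn G Set.univ gB ∧ ∀ x, x ∉ S → gB x = f x := by
      refine ArbAux3.buildExt (G := G) (L := L) (f := f) (g := gB) hSeqB hfL hfArb hgBf
        (by rw [hgBu1]; exact hmL1) (by rw [hgBu2]; exact hc2L)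
        (by rw [hgBu3]; exact hc3L) (by rw [hgBu]; exact hcuL)
        ?_ ?_ ?_ ?_
      · apply ArbAux2.subs_of_ncard_le_one
        refine le_trans (Set.ncard_le_ncard ?_ (Set.toFinite _)) he1
        rintro w ⟨hw, hadj, hval⟩
        exact ⟨hw, hadj, by rw [← hgBf w hw, hval, hgBu1]⟩
      · refine Set.Subsingleton.anti Set.subsingleton_singleton (t := ({u₁} : Set V)) ?_
        rintro w ⟨hwm, hadj, hval⟩
        rcases hwm with rfl | hw
        · rfl
        · exfalso
          have hwmem : w ∈ {w | w ∈ Sᶜ ∧ G.Adj u₂ w ∧ f w = c2} :=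
            ⟨hw, hadj, by rw [← hgBf w hw, hval, hgBu2]⟩
          rw [hcls2empty] at hwmem
          exact hwmem
      · refine Set.Subsingleton.anti Set.subsingleton_singleton (t := ({u₂} : Set V)) ?_
        rintro w ⟨hwm, hadj, hval⟩
        rcases hwm with rfl | rfl | hw
        · rfl
        · exact absurd hadj.symm hnd
        · exfalso
          have hwmem : w ∈ {w | w ∈ N3 ∧ f w = c3} :=
            ⟨⟨hw, hadj⟩, by rw [← hgBf w hw, hval, hgBu3]⟩
          rw [hcls3empty] at hwmem
          exact hwmem
      · intro w hw x hx
        exfalso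
        obtain ⟨hwm, hadj, hval⟩ := hw
        rw [hgBu] at hval
        have hw4 : w ∈ G.neighborSet u := hadj
        rw [hnbr] at hw4
        rcases hw4 with rfl | rfl | rfl | h4
        · rw [hgBu1] at hval; exact hmcu hval
        · rw [hgBu2] at hval; exact hmcu (hc2m.symm.trans hval)
        · rw [hgBu3] at hval; exact hmcu (hc3m.symm.trans hval)
        · rw [Set.mem_singleton_iff] at h4
          rw [h4] at hval
          rw [hgBf u₄ hu4c] at hval
          exact hcut.symm hval
    have hne1 : m ≠ c1 := by rw [hc1t]; exact hmt
    exact ⟨g1, gB, hp1, hpB, fun h => hne1 (by rw [← hgBu1, ← h]; exact hg1u1)⟩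

end MainProof
end

section
/- Let G be a finite simple graph and let L be a list-assignment for G with |L(v)| = 3 for every vertex v. Let u be a vertex whose neighborhood is exactly {u_1, u_2, …, u_8}, where u_t u_{t+1} is an edge of G for every t (indices modulo 8). Suppose there are four distinct indices i, j, k, l ∈ {1, …, 8} such that deg(u_i) = deg(u_j) = 4, deg(u_k) ≤ 5, deg(u_l) = 6 (degrees taken in G), and l ≡ j + 1 (mod 8). Then every arboreal L-coloring of G − {u, u_i, u_j, u_k, u_l} can be extended to an arboreal L-coloring of G in at least two distinct ways. -/
open SimpleGraph

section AuxWalk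

variable {V : Type*} {G : SimpleGraph V}

lemma ArbAux.exists_lift_walk {T : Set V} :
    ∀ {a b : V} (p : G.Walk a b) (hsup : ∀ x ∈ p.support, x ∈ T),
      ∃ q : (G.induce T).Walk ⟨a, hsup a p.start_mem_support⟩ ⟨b, hsup b p.end_mem_support⟩,
        q.support.map Subtype.val = p.support ∧
        q.edges.map (Sym2.map Subtype.val) = p.edges := by
  intro a b p
  induction p with
  | nil =>
    intro hsup
    exact ⟨.nil, by simp, by simp⟩
  | @cons x y z h p ih =>
    intro hsup
    obtain ⟨q, hq1, hq2⟩ := ih (fun t ht => hsup t (by simp [Walk.support_cons, ht]))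
    have hadj : (G.induce T).Adj ⟨x, hsup x (Walk.start_mem_support _)⟩
        ⟨y, hsup y (by simp [Walk.support_cons])⟩ := h
    refine ⟨.cons hadj q, ?_, ?_⟩
    · simp only [Walk.support_cons, List.map_cons, hq1]
    · simp only [Walk.edges_cons, List.map_cons, hq2]
      rfl

lemma ArbAux.isAcyclic_induce_iff {T : Set V} :
    (G.induce T).IsAcyclic ↔
      ∀ (a : V) (p : G.Walk a a), (∀ x ∈ p.support, x ∈ T) → ¬ p.IsCycle := by
  constructor
  · intro hac a p hsup hcyc
    obtain ⟨q, hq1, hq2⟩ := ArbAux.exists_lift_walk p hsup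
    refine hac q ?_
    rw [Walk.isCycle_def]
    refine ⟨?_, ?_, ?_⟩
    · rw [Walk.isTrail_def]
      have ht := hcyc.isTrail
      rw [Walk.isTrail_def, ← hq2] at ht
      exact ht.of_map
    · intro hnil
      have h3 := hcyc.three_le_length
      have hlen : q.edges.length = p.edges.length := by rw [← hq2, List.length_map]
      rw [Walk.length_edges, Walk.length_edges] at hlen
      rw [hnil] at hlen
      simp at hlen
      omega
    · have htail : q.support.tail.map Subtype.val = p.support.tail := by
        rw [← hq1]; cases q.support <;> simp
      have hnd := hcyc.support_nodup
      rw [← htail] at hnd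
      exact hnd.of_map
  · intro h a q hq
    have hpc : (q.map ((SimpleGraph.Embedding.induce (G := G) T)).toHom).IsCycle :=
      hq.map ((SimpleGraph.Embedding.induce (G := G) T)).injective
    refine h _ _ ?_ hpc
    intro x hx
    rw [Walk.support_map] at hx
    obtain ⟨y, _, rfl⟩ := List.mem_map.mp hx
    exact y.2

end AuxWalk

section MainLemma

variable {V : Type*} {α : Type*} {G : SimpleGraph V}

lemma ArbAux.two_nbrs {x : V} (p : G.Walk x x) (hp : p.IsCycle) :
    ∃ y z : V, y ≠ z ∧ G.Adj x y ∧ G.Adj x z ∧ y ∈ p.support ∧ z ∈ p.support := by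
  obtain ⟨y, hxy, q', hq'⟩ := (Walk.not_nil_iff).mp hp.not_nil
  subst hq'
  have hcons := (Walk.cons_isCycle_iff q' hxy).mp hp
  have h3 := hp.three_le_length
  rw [Walk.length_cons] at h3
  have hq'nil : ¬ q'.reverse.Nil := by
    rw [Walk.not_nil_iff_lt_length, Walk.length_reverse]
    omega
  obtain ⟨z, hxz, q'', hq''⟩ := (Walk.not_nil_iff).mp hq'nil
  have hzmem : z ∈ q'.support := by
    have : z ∈ q'.reverse.support := by
      rw [hq'', Walk.support_cons]
      simp [Walk.start_mem_support]
    rwa [Walk.support_reverse, List.mem_reverse] at this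
  have hzy : z ≠ y := by
    intro hzy
    apply hcons.2
    have : s(x, z) ∈ q'.reverse.edges := by
      rw [hq'', Walk.edges_cons]
      simp
    rw [Walk.edges_reverse, List.mem_reverse] at this
    rw [hzy] at this
    exact this
  exact ⟨y, z, fun h => hzy h.symm, hxy, hxz,
    by rw [Walk.support_cons]; exact List.mem_cons_of_mem _ q'.start_mem_support,
    by rw [Walk.support_cons]; exact List.mem_cons_of_mem _ hzmem⟩

lemma ArbAux.arbColOn_univ_of (S : Set V) (f g : V → α)
    (hfg : ∀ x, x ∉ S → g x = f x)
    (hf : ArbColOn G Sᶜ f)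
    (rk : V → ℕ)
    (hrkinj : ∀ x ∈ S, ∀ y ∈ S, rk x = rk y → x = y)
    (hbound : ∀ v ∈ S, ∀ a b : V, G.Adj v a → G.Adj v b → g a = g v → g b = g v →
      (a ∉ S ∨ rk a < rk v) → (b ∉ S ∨ rk b < rk v) → a = b) :
    ArbColOn G Set.univ g := by
  classical
  intro c
  rw [ArbAux.isAcyclic_induce_iff]
  intro a p hsup hcyc
  have hgc : ∀ x ∈ p.support, g x = c := fun x hx => (hsup x hx).2
  by_cases hS : ∃ x ∈ p.support, x ∈ S
  · obtain ⟨x0, hx0, hx0S⟩ := hS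
    set F : Finset V := p.support.toFinset.filter (· ∈ S) with hF
    have hFne : F.Nonempty := ⟨x0, by simp [hF, hx0, hx0S]⟩
    obtain ⟨x, hxF, hmax⟩ := F.exists_max_image rk hFne
    have hxsup : x ∈ p.support := by
      rw [hF, Finset.mem_filter, List.mem_toFinset] at hxF; exact hxF.1
    have hxS : x ∈ S := by
      rw [hF, Finset.mem_filter] at hxF; exact hxF.2
    have hq := hcyc.rotate hxsup
    have hmemq : ∀ y, y ∈ (p.rotate x hxsup).support → y ∈ p.support := by
      intro y hy
      rcases (Walk.mem_support_iff (p.rotate x hxsup)).mp hy with h1 | h1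
      · rwa [h1]
      · have := (Walk.support_rotate p x hxsup).perm.mem_iff.mp h1
        exact (Walk.mem_support_iff p).mpr (Or.inr this)
    obtain ⟨y, z, hyz, hxy, hxz, hymem, hzmem⟩ := ArbAux.two_nbrs _ hq
    have hymem' := hmemq y hymem
    have hzmem' := hmemq z hzmem
    have hcond : ∀ t : V, t ∈ p.support → G.Adj x t → (t ∉ S ∨ rk t < rk x) := by
      intro t htmem hadj
      by_cases htS : t ∈ S
      · right
        have hle : rk t ≤ rk x := hmax t (by simp [hF, htmem, htS])
        rcases lt_or_eq_of_le hle with h | h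
        · exact h
        · exact absurd (hrkinj t htS x hxS h) hadj.ne'
      · exact Or.inl htS
    exact hyz <| hbound x hxS y z hxy hxz
      (by rw [hgc y hymem', hgc x hxsup]) (by rw [hgc z hzmem', hgc x hxsup])
      (hcond y hymem' hxy) (hcond z hzmem' hxz)
  · push_neg at hS
    refine (ArbAux.isAcyclic_induce_iff.mp (hf c)) a p ?_ hcyc
    intro x hx
    exact ⟨hS x hx, by rw [← hfg x (hS x hx)]; exact hgc x hx⟩

end MainLemma

section Pigeon

variable {V : Type*} {α : Type*}

lemma ArbAux.sum_counts_le [DecidableEq α] (L : Finset α) (N : Finset V) (col : V → α)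
    [∀ a : α, DecidablePred (fun n : V => col n = a)] :
    ∑ a ∈ L, (N.filter fun n => col n = a).card ≤ N.card := by
  classical
  have hdisj : ∀ x ∈ L, ∀ y ∈ L, x ≠ y →
      Disjoint (N.filter fun n => col n = x) (N.filter fun n => col n = y) := by
    intro x _ y _ hxy
    rw [Finset.disjoint_left]
    intro n hn hn2
    rw [Finset.mem_filter] at hn hn2
    exact hxy (hn.2 ▸ hn2.2 ▸ rfl)
  calc ∑ a ∈ L, (N.filter fun n => col n = a).card
      = (L.biUnion fun a => N.filter fun n => col n = a).card :=
        (Finset.card_biUnion hdisj).symm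
    _ ≤ N.card := Finset.card_le_card (by
        intro n hn
        rw [Finset.mem_biUnion] at hn
        obtain ⟨a, _, hn⟩ := hn
        exact (Finset.mem_filter.mp hn).1)

lemma ArbAux.exists_le_one [DecidableEq α] (L : Finset α) (hL : L.card = 3)
    (N : Finset V) (col : V → α)
    [∀ a : α, DecidablePred (fun n : V => col n = a)]
    (hN : N.card ≤ 5) :
    ∃ a ∈ L, (N.filter fun n => col n = a).card ≤ 1 := by
  by_contra hcon
  push_neg at hcon
  have h2 : ∀ a ∈ L, 2 ≤ (N.filter fun n => col n = a).card := fun a ha => hcon a ha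
  have : 6 ≤ ∑ a ∈ L, (N.filter fun n => col n = a).card := by
    calc (6 : ℕ) = ∑ _a ∈ L, 2 := by rw [Finset.sum_const, hL, smul_eq_mul]
    _ ≤ _ := Finset.sum_le_sum h2
  have := ArbAux.sum_counts_le L N col
  omega

lemma ArbAux.exists_two_le_one [DecidableEq α] (L : Finset α) (hL : L.card = 3)
    (N : Finset V) (col : V → α)
    [∀ a : α, DecidablePred (fun n : V => col n = a)]
    (hN : N.card ≤ 3) :
    ∃ a ∈ L, ∃ b ∈ L, a ≠ b ∧ (N.filter fun n => col n = a).card ≤ 1 ∧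
      (N.filter fun n => col n = b).card ≤ 1 := by
  classical
  set Bad := L.filter (fun a => 2 ≤ (N.filter fun n => col n = a).card) with hBad
  clear_value Bad
  have hBadsub : Bad ⊆ L := by rw [hBad]; exact Finset.filter_subset _ _
  have hBadmem : ∀ a ∈ Bad, 2 ≤ (N.filter fun n => col n = a).card := by
    intro a ha; rw [hBad, Finset.mem_filter] at ha; exact ha.2
  have hsumL := ArbAux.sum_counts_le L N col
  have hsumBad : 2 * Bad.card ≤ ∑ a ∈ Bad, (N.filter fun n => col n = a).card := by
    calc 2 * Bad.card = ∑ _a ∈ Bad, 2 := by rw [Finset.sum_const]; ring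
    _ ≤ _ := Finset.sum_le_sum hBadmem
  have hsub : ∑ a ∈ Bad, (N.filter fun n => col n = a).card ≤
      ∑ a ∈ L, (N.filter fun n => col n = a).card :=
    Finset.sum_le_sum_of_subset hBadsub
  have hbadcard : Bad.card ≤ 1 := by omega
  have hgood : 1 < (L \ Bad).card := by
    rw [Finset.card_sdiff_of_subset hBadsub, hL]
    omega
  obtain ⟨a, ha, b, hb, hab⟩ := Finset.one_lt_card.mp hgood
  have hnb : ∀ t ∈ L \ Bad, (N.filter fun n => col n = t).card ≤ 1 := by
    intro t ht
    rw [Finset.mem_sdiff, hBad, Finset.mem_filter] at ht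
    have := ht.2
    push_neg at this
    have := this ht.1
    omega
  exact ⟨a, (Finset.mem_sdiff.mp ha).1, b, (Finset.mem_sdiff.mp hb).1, hab,
    hnb a ha, hnb b hb⟩

end Pigeon


theorem stmt_8 {V α : Type*} [Fintype V] (G : SimpleGraph V)
    (L : V → Finset α) (hL : ∀ x, (L x).card = 3)
    (u : V) (w : Fin 8 → V) (hw : Function.Injective w)
    (hnbr : G.neighborSet u = Set.range w)
    (hcyc : ∀ t : Fin 8, G.Adj (w t) (w (t + 1)))
    (i j k l : Fin 8)
    (hij : i ≠ j) (hik : i ≠ k) (hil : i ≠ l) (hjk : j ≠ k) (hjl : j ≠ l) (hkl : k ≠ l)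
    (hl : l = j + 1)
    (hdi : (G.neighborSet (w i)).ncard = 4) (hdj : (G.neighborSet (w j)).ncard = 4)
    (hdk : (G.neighborSet (w k)).ncard ≤ 5) (hdl : (G.neighborSet (w l)).ncard = 6)
    (f : V → α)
    (hfL : ∀ x, x ∉ ({u, w i, w j, w k, w l} : Set V) → f x ∈ L x)
    (hf : ArbColOn G ({u, w i, w j, w k, w l} : Set V)ᶜ f) :
    ∃ g₁ g₂ : V → α,
      ((∀ x, g₁ x ∈ L x) ∧ ArbColOn G Set.univ g₁ ∧
        ∀ x, x ∉ ({u, w i, w j, w k, w l} : Set V) → g₁ x = f x) ∧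
      ((∀ x, g₂ x ∈ L x) ∧ ArbColOn G Set.univ g₂ ∧
        ∀ x, x ∉ ({u, w i, w j, w k, w l} : Set V) → g₂ x = f x) ∧
      g₁ ≠ g₂ := by
  classical
  set S : Set V := {u, w i, w j, w k, w l} with hS
  have hadj : ∀ t : Fin 8, G.Adj u (w t) := by
    intro t
    have : w t ∈ G.neighborSet u := by rw [hnbr]; exact Set.mem_range_self t
    exact this
  -- distinctness facts
  have nij : w i ≠ w j := fun h => hij (hw h)
  have nik : w i ≠ w k := fun h => hik (hw h)
  have nil2 : w i ≠ w l := fun h => hil (hw h)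
  have nji : w j ≠ w i := nij.symm
  have njk : w j ≠ w k := fun h => hjk (hw h)
  have njl : w j ≠ w l := fun h => hjl (hw h)
  have nki : w k ≠ w i := nik.symm
  have nkj : w k ≠ w j := njk.symm
  have nkl : w k ≠ w l := fun h => hkl (hw h)
  have nli : w l ≠ w i := nil2.symm
  have nlj : w l ≠ w j := njl.symm
  have nlk : w l ≠ w k := nkl.symm
  have nui : u ≠ w i := (hadj i).ne
  have nuj : u ≠ w j := (hadj j).ne
  have nuk : u ≠ w k := (hadj k).ne
  have nul : u ≠ w l := (hadj l).ne
  have niu : w i ≠ u := nui.symm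
  have nju : w j ≠ u := nuj.symm
  have nku : w k ≠ u := nuk.symm
  have nlu : w l ≠ u := nul.symm
  have hSmem : ∀ x, x ∈ S ↔ x = u ∨ x = w i ∨ x = w j ∨ x = w k ∨ x = w l := by
    intro x; simp [hS]
  -- rank function
  set rk : V → ℕ := fun x => if x = w i then 0 else if x = u then 1 else if x = w l then 2
    else if x = w k then 3 else if x = w j then 4 else 5 with hrk
  have hrk_i : rk (w i) = 0 := by simp [hrk]
  have hrk_u : rk u = 1 := by simp [hrk, nui]
  have hrk_l : rk (w l) = 2 := by simp [hrk, nli, nlu]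
  have hrk_k : rk (w k) = 3 := by simp [hrk, nki, nku, nkl]
  have hrk_j : rk (w j) = 4 := by simp [hrk, nji, nju, njl, njk]
  have hlt : ∀ n : V, ∀ m : ℕ, rk n < m →
      (n = w i ∧ 0 < m) ∨ (n = u ∧ 1 < m) ∨ (n = w l ∧ 2 < m) ∨ (n = w k ∧ 3 < m) ∨
        (n = w j ∧ 4 < m) ∨ 5 < m := by
    intro n m h
    simp only [hrk] at h
    split_ifs at h with h1 h2 h3 h4 h5
    · exact Or.inl ⟨h1, by omega⟩
    · exact Or.inr (Or.inl ⟨h2, by omega⟩)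
    · exact Or.inr (Or.inr (Or.inl ⟨h3, by omega⟩))
    · exact Or.inr (Or.inr (Or.inr (Or.inl ⟨h4, by omega⟩)))
    · exact Or.inr (Or.inr (Or.inr (Or.inr (Or.inl ⟨h5, by omega⟩))))
    · exact Or.inr (Or.inr (Or.inr (Or.inr (Or.inr (by omega)))))
  have hrkinj : ∀ x ∈ S, ∀ y ∈ S, rk x = rk y → x = y := by
    intro x hx y hy h
    rw [hSmem] at hx hy
    rcases hx with rfl | rfl | rfl | rfl | rfl <;> rcases hy with rfl | rfl | rfl | rfl | rfl <;>
      simp only [hrk_i, hrk_u, hrk_l, hrk_k, hrk_j] at h <;>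
      first
        | rfl
        | exact absurd h (by omega)
  -- neighbor finsets
  set NS : V → Finset V := fun v => (G.neighborSet v).toFinset with hNS
  have hNmem : ∀ v n : V, n ∈ NS v ↔ G.Adj v n := by
    intro v n; simp [hNS]
  have hNcard : ∀ v : V, (NS v).card = (G.neighborSet v).ncard := by
    intro v; rw [Set.ncard_eq_toFinset_card']
  have hNu : (NS u).card = 8 := by
    have h1 : NS u = Finset.univ.image w := by
      ext x; simp [hNS, hnbr]
    rw [h1, Finset.card_image_of_injective _ hw]
    simp
  -- slots
  set slot : V → Finset V := fun v => (NS v).filter (fun n => n ∉ S ∨ rk n < rk v) with hslot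
  have hslotmem : ∀ v n : V, n ∈ slot v ↔ G.Adj v n ∧ (n ∉ S ∨ rk n < rk v) := by
    intro v n; rw [hslot]; simp only [Finset.mem_filter, hNmem]
  have huS : u ∈ S := by rw [hSmem]; tauto
  have hiS : w i ∈ S := by rw [hSmem]; tauto
  have hjS : w j ∈ S := by rw [hSmem]; tauto
  have hkS : w k ∈ S := by rw [hSmem]; tauto
  have hlS : w l ∈ S := by rw [hSmem]; tauto
  -- slot cardinality bounds
  have hs_i : (slot (w i)).card ≤ 3 := by
    have hsub : slot (w i) ⊆ (NS (w i)).erase u := by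
      intro n hn
      rw [hslotmem] at hn
      rw [Finset.mem_erase]
      refine ⟨?_, (hNmem _ _).mpr hn.1⟩
      rintro rfl
      rcases hn.2 with h | h
      · exact h huS
      · rw [hrk_u, hrk_i] at h; omega
    have h1 := Finset.card_erase_of_mem ((hNmem (w i) u).mpr (hadj i).symm)
    have h2 := Finset.card_le_card hsub
    rw [h1, hNcard, hdi] at h2
    omega
  have hs_u : (slot u).card ≤ 5 := by
    have hsub : slot u ⊆ (((NS u).erase (w j)).erase (w k)).erase (w l) := by
      intro n hn
      rw [hslotmem] at hn
      have hcase : ∀ t : Fin 8, w t ∈ S → rk (w t) ≥ 2 → n = w t → False := by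
        rintro t htS hrkt rfl
        rcases hn.2 with h | h
        · exact h htS
        · rw [hrk_u] at h; omega
      rw [Finset.mem_erase, Finset.mem_erase, Finset.mem_erase]
      refine ⟨fun h => hcase l hlS hrk_l.ge h, fun h => hcase k hkS (by rw [hrk_k]; omega) h,
        fun h => hcase j hjS (by rw [hrk_j]; omega) h, (hNmem _ _).mpr hn.1⟩
    have hm1 : w j ∈ NS u := (hNmem _ _).mpr (hadj j)
    have hm2 : w k ∈ (NS u).erase (w j) := Finset.mem_erase.mpr ⟨nkj, (hNmem _ _).mpr (hadj k)⟩
    have hm3 : w l ∈ ((NS u).erase (w j)).erase (w k) :=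
      Finset.mem_erase.mpr ⟨nlk, Finset.mem_erase.mpr ⟨nlj, (hNmem _ _).mpr (hadj l)⟩⟩
    have h1 := Finset.card_erase_of_mem hm1
    have h2 := Finset.card_erase_of_mem hm2
    have h3 := Finset.card_erase_of_mem hm3
    have h4 := Finset.card_le_card hsub
    rw [h3, h2, h1, hNu] at h4
    omega
  have hs_l : (slot (w l)).card ≤ 5 := by
    have hsub : slot (w l) ⊆ (NS (w l)).erase (w j) := by
      intro n hn
      rw [hslotmem] at hn
      rw [Finset.mem_erase]
      refine ⟨?_, (hNmem _ _).mpr hn.1⟩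
      rintro rfl
      rcases hn.2 with h | h
      · exact h hjS
      · rw [hrk_j, hrk_l] at h; omega
    have hadjlj : G.Adj (w l) (w j) := by
      have := hcyc j
      rw [← hl] at this
      exact this.symm
    have h1 := Finset.card_erase_of_mem ((hNmem (w l) (w j)).mpr hadjlj)
    have h2 := Finset.card_le_card hsub
    rw [h1, hNcard, hdl] at h2
    omega
  have hs_k : (slot (w k)).card ≤ 5 := by
    have h1 : (slot (w k)).card ≤ (NS (w k)).card := Finset.card_le_card (by
      intro n hn; rw [hslotmem] at hn; exact (hNmem _ _).mpr hn.1)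
    rw [hNcard] at h1
    omega
  have hs_j : (slot (w j)).card ≤ 5 := by
    have h1 : (slot (w j)).card ≤ (NS (w j)).card := Finset.card_le_card (by
      intro n hn; rw [hslotmem] at hn; exact (hNmem _ _).mpr hn.1)
    rw [hNcard, hdj] at h1
    omega
  -- the builder
  have build : ∀ cA : α, cA ∈ L (w i) → ((slot (w i)).filter fun n => f n = cA).card ≤ 1 →
      ∃ g : V → α, (∀ x, g x ∈ L x) ∧ ArbColOn G Set.univ g ∧ (∀ x, x ∉ S → g x = f x) ∧
        g (w i) = cA := by
    intro cA hcA hcAcnt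
    obtain ⟨cu, hcu, hcucnt⟩ := ArbAux.exists_le_one (L u) (hL u) (slot u)
      (fun n => if n = w i then cA else f n) hs_u
    obtain ⟨cL, hcL, hcLcnt⟩ := ArbAux.exists_le_one (L (w l)) (hL (w l)) (slot (w l))
      (fun n => if n = u then cu else if n = w i then cA else f n) hs_l
    obtain ⟨cK, hcK, hcKcnt⟩ := ArbAux.exists_le_one (L (w k)) (hL (w k)) (slot (w k))
      (fun n => if n = w l then cL else if n = u then cu else if n = w i then cA else f n) hs_k
    obtain ⟨cB, hcB, hcBcnt⟩ := ArbAux.exists_le_one (L (w j)) (hL (w j)) (slot (w j))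
      (fun n => if n = w k then cK else if n = w l then cL else if n = u then cu else
        if n = w i then cA else f n) hs_j
    set g : V → α := fun n => if n = w j then cB else if n = w k then cK else if n = w l then cL
      else if n = u then cu else if n = w i then cA else f n with hg
    have hg_i : g (w i) = cA := by simp [hg, nij, nik, nil2, niu]
    have hg_u : g u = cu := by simp [hg, nuj, nuk, nul]
    have hg_l : g (w l) = cL := by simp [hg, nlj, nlk]
    have hg_k : g (w k) = cK := by simp [hg, nkj]
    have hg_j : g (w j) = cB := by simp [hg]
    have hg_off : ∀ x, x ∉ S → g x = f x := by
      intro x hx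
      rw [hSmem] at hx
      push_neg at hx
      obtain ⟨h1, h2, h3, h4, h5⟩ := hx
      simp [hg, h1, h2, h3, h4, h5]
    have hgL : ∀ x, g x ∈ L x := by
      intro x
      by_cases h3 : x = w j
      · subst h3; rw [hg_j]; exact hcB
      by_cases h4 : x = w k
      · subst h4; rw [hg_k]; exact hcK
      by_cases h5 : x = w l
      · subst h5; rw [hg_l]; exact hcL
      by_cases h1 : x = u
      · subst h1; rw [hg_u]; exact hcu
      by_cases h2 : x = w i
      · subst h2; rw [hg_i]; exact hcA
      have hxS : x ∉ S := by rw [hSmem]; tauto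
      rw [hg_off x hxS]
      exact hfL x hxS
    -- count facts transferred to g
    have count_i : ((slot (w i)).filter fun n => g n = g (w i)).card ≤ 1 := by
      have he : ((slot (w i)).filter fun n => g n = g (w i)) =
          ((slot (w i)).filter fun n => f n = cA) := by
        apply Finset.filter_congr
        intro n hn
        rw [hslotmem] at hn
        have hnotS : n ∉ S := by
          rcases hn.2 with h | h
          · exact h
          · rw [hrk_i] at h; omega
        rw [hg_i, hg_off n hnotS]
      rw [he]
      exact hcAcnt
    have count_u : ((slot u).filter fun n => g n = g u).card ≤ 1 := by
      have he : ((slot u).filter fun n => g n = g u) =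
          ((slot u).filter fun n => (if n = w i then cA else f n) = cu) := by
        apply Finset.filter_congr
        intro n hn
        rw [hslotmem] at hn
        rw [hg_u]
        have hcol : g n = (if n = w i then cA else f n) := by
          rcases hn.2 with h | h
          · have h2 : n ≠ w i := fun hh => h (hh ▸ hiS)
            rw [hg_off n h, if_neg h2]
          · rcases hlt n _ h with ⟨rfl, _⟩ | ⟨rfl, hm⟩ | ⟨rfl, hm⟩ | ⟨rfl, hm⟩ | ⟨rfl, hm⟩ | hm
            · rw [hg_i, if_pos rfl]
            all_goals rw [hrk_u] at h; omega
        rw [hcol]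
      rw [he]
      exact hcucnt
    have count_l : ((slot (w l)).filter fun n => g n = g (w l)).card ≤ 1 := by
      have he : ((slot (w l)).filter fun n => g n = g (w l)) =
          ((slot (w l)).filter fun n =>
            (if n = u then cu else if n = w i then cA else f n) = cL) := by
        apply Finset.filter_congr
        intro n hn
        rw [hslotmem] at hn
        rw [hg_l]
        have hcol : g n = (if n = u then cu else if n = w i then cA else f n) := by
          rcases hn.2 with h | h
          · have h1 : n ≠ u := fun hh => h (hh ▸ huS)
            have h2 : n ≠ w i := fun hh => h (hh ▸ hiS)
            rw [hg_off n h, if_neg h1, if_neg h2]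
          · rcases hlt n _ h with ⟨rfl, _⟩ | ⟨rfl, _⟩ | ⟨rfl, hm⟩ | ⟨rfl, hm⟩ | ⟨rfl, hm⟩ | hm
            · rw [hg_i, if_neg niu, if_pos rfl]
            · rw [hg_u, if_pos rfl]
            all_goals rw [hrk_l] at h; omega
        rw [hcol]
      rw [he]
      exact hcLcnt
    have count_k : ((slot (w k)).filter fun n => g n = g (w k)).card ≤ 1 := by
      have he : ((slot (w k)).filter fun n => g n = g (w k)) =
          ((slot (w k)).filter fun n =>
            (if n = w l then cL else if n = u then cu else if n = w i then cA else f n) = cK) := by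
        apply Finset.filter_congr
        intro n hn
        rw [hslotmem] at hn
        rw [hg_k]
        have hcol : g n =
            (if n = w l then cL else if n = u then cu else if n = w i then cA else f n) := by
          rcases hn.2 with h | h
          · have h1 : n ≠ u := fun hh => h (hh ▸ huS)
            have h2 : n ≠ w i := fun hh => h (hh ▸ hiS)
            have h3 : n ≠ w l := fun hh => h (hh ▸ hlS)
            rw [hg_off n h, if_neg h3, if_neg h1, if_neg h2]
          · rcases hlt n _ h with ⟨rfl, _⟩ | ⟨rfl, _⟩ | ⟨rfl, _⟩ | ⟨rfl, hm⟩ | ⟨rfl, hm⟩ | hm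
            · rw [hg_i, if_neg nil2, if_neg niu, if_pos rfl]
            · rw [hg_u, if_neg nul, if_pos rfl]
            · rw [hg_l, if_pos rfl]
            all_goals rw [hrk_k] at h; omega
        rw [hcol]
      rw [he]
      exact hcKcnt
    have count_j : ((slot (w j)).filter fun n => g n = g (w j)).card ≤ 1 := by
      have he : ((slot (w j)).filter fun n => g n = g (w j)) =
          ((slot (w j)).filter fun n =>
            (if n = w k then cK else if n = w l then cL else if n = u then cu else
              if n = w i then cA else f n) = cB) := by
        apply Finset.filter_congr
        intro n hn
        rw [hslotmem] at hn
        rw [hg_j]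
        have hcol : g n = (if n = w k then cK else if n = w l then cL else if n = u then cu else
            if n = w i then cA else f n) := by
          rcases hn.2 with h | h
          · have h1 : n ≠ u := fun hh => h (hh ▸ huS)
            have h2 : n ≠ w i := fun hh => h (hh ▸ hiS)
            have h3 : n ≠ w l := fun hh => h (hh ▸ hlS)
            have h4 : n ≠ w k := fun hh => h (hh ▸ hkS)
            rw [hg_off n h, if_neg h4, if_neg h3, if_neg h1, if_neg h2]
          · rcases hlt n _ h with ⟨rfl, _⟩ | ⟨rfl, _⟩ | ⟨rfl, _⟩ | ⟨rfl, _⟩ | ⟨rfl, hm⟩ | hm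
            · rw [hg_i, if_neg nik, if_neg nil2, if_neg niu, if_pos rfl]
            · rw [hg_u, if_neg nuk, if_neg nul, if_pos rfl]
            · rw [hg_l, if_neg nlk, if_pos rfl]
            · rw [hg_k, if_pos rfl]
            all_goals rw [hrk_j] at h; omega
        rw [hcol]
      rw [he]
      exact hcBcnt
    -- the bound hypothesis
    have hbound : ∀ v ∈ S, ∀ a b : V, G.Adj v a → G.Adj v b → g a = g v → g b = g v →
        (a ∉ S ∨ rk a < rk v) → (b ∉ S ∨ rk b < rk v) → a = b := by
      intro v hv a b hva hvb hga hgb hsa hsb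
      have hmem : ∀ t : V, G.Adj v t → g t = g v → (t ∉ S ∨ rk t < rk v) →
          t ∈ (slot v).filter fun n => g n = g v := by
        intro t h1 h2 h3
        rw [Finset.mem_filter, hslotmem]
        exact ⟨⟨h1, h3⟩, h2⟩
      have hcard : ((slot v).filter fun n => g n = g v).card ≤ 1 := by
        rw [hSmem] at hv
        rcases hv with rfl | rfl | rfl | rfl | rfl
        · exact count_u
        · exact count_i
        · exact count_j
        · exact count_k
        · exact count_l
      exact Finset.card_le_one.mp hcard a (hmem a hva hga hsa) b (hmem b hvb hgb hsb)
    refine ⟨g, hgL, ?_, hg_off, hg_i⟩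
    exact ArbAux.arbColOn_univ_of S f g hg_off hf rk hrkinj hbound
  -- two choices for the color of w i
  obtain ⟨cA1, hA1, cA2, hA2, hAne, hcnt1, hcnt2⟩ :=
    ArbAux.exists_two_le_one (L (w i)) (hL (w i)) (slot (w i)) f hs_i
  obtain ⟨g1, hg1L, hg1arb, hg1off, hg1i⟩ := build cA1 hA1 hcnt1
  obtain ⟨g2, hg2L, hg2arb, hg2off, hg2i⟩ := build cA2 hA2 hcnt2
  refine ⟨g1, g2, ⟨hg1L, hg1arb, hg1off⟩, ⟨hg2L, hg2arb, hg2off⟩, ?_⟩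
  intro h
  apply hAne
  rw [← hg1i, ← hg2i, h]
end

section
/- Let G be a finite simple graph on n vertices such that every nonempty induced subgraph of G contains a vertex whose degree in that subgraph is at most 3, and let L be a list-assignment for G with |L(v)| = 3 for every vertex v. Then G has at least 2^n arboreal L-colorings. -/
open SimpleGraph

/-- No cycle of `G` has all its support inside `t`. -/
def NoCycIn {V : Type*} (G : SimpleGraph V) (t : Set V) : Prop :=
  ∀ ⦃v : V⦄ (p : G.Walk v v), p.IsCycle → ¬ (∀ u ∈ p.support, u ∈ t)

lemma noCycIn_empty {V : Type*} (G : SimpleGraph V) : NoCycIn G (∅ : Set V) :=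
  fun v p _ hsup => Set.notMem_empty v (hsup v p.start_mem_support)

lemma noCycIn_mono {V : Type*} {G : SimpleGraph V} {t t' : Set V} (h : t' ⊆ t)
    (ht : NoCycIn G t) : NoCycIn G t' :=
  fun _ p hp hsup => ht p hp (fun u hu => h (hsup u hu))

lemma noCycIn_insert {V : Type*} {G : SimpleGraph V} {t : Set V} {x : V}
    (ht : NoCycIn G t) (hN : {y | y ∈ t ∧ G.Adj x y}.Subsingleton) :
    NoCycIn G (insert x t) := by
  classical
  intro v p hp hsup
  by_cases hx : x ∈ p.support
  · have hqc : (p.rotate x hx).IsCycle := hp.rotate hx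
    have hqsup : ∀ u ∈ (p.rotate x hx).support, u ∈ insert x t := by
      intro u hu
      rcases ((p.rotate x hx).support_eq_cons ▸ hu : u ∈ x :: (p.rotate x hx).support.tail) with h1
      rcases List.mem_cons.mp h1 with rfl | h2
      · exact Set.mem_insert _ _
      · exact hsup u (List.mem_of_mem_tail ((p.support_rotate x hx).mem_iff.mp h2))
    generalize hq : p.rotate x hx = q at hqc hqsup
    cases q with
    | nil => exact hqc.not_of_nil
    | @cons _ a _ h q' =>
      rw [SimpleGraph.Walk.cons_isCycle_iff] at hqc
      obtain ⟨hq'path, he⟩ := hqc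
      have hax : a ≠ x := h.ne'
      have hnr : ¬ q'.reverse.Nil := SimpleGraph.Walk.not_nil_of_ne (fun hh => hax hh.symm)
      set b := q'.reverse.getVert 1 with hb
      have hadjb : G.Adj x b := SimpleGraph.Walk.adj_snd (p := q'.reverse) hnr
      have hbedge : s(x, b) ∈ q'.reverse.edges := by
        conv_lhs => rw [← SimpleGraph.Walk.cons_tail_eq q'.reverse hnr]
        exact List.mem_cons_self
      have he' : s(x, b) ∈ q'.edges := by
        rwa [SimpleGraph.Walk.edges_reverse, List.mem_reverse] at hbedge
      have hab : a ≠ b := by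
        intro hh
        rw [← hh] at he'
        exact he he'
      have hat : a ∈ t := by
        have := hqsup a (by simp [SimpleGraph.Walk.support_cons,
          q'.start_mem_support])
        rcases this with h1 | h1
        · exact absurd h1 hax
        · exact h1
      have hbsup : b ∈ q'.support := by
        have : b ∈ q'.reverse.support := by
          rw [SimpleGraph.Walk.mem_support_iff_exists_getVert]
          exact ⟨1, rfl, by
            have : 0 < q'.reverse.length := by
              rw [SimpleGraph.Walk.not_nil_iff_lt_length] at hnr; exact hnr
            omega⟩
        rwa [SimpleGraph.Walk.support_reverse, List.mem_reverse] at this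
      have hbt : b ∈ t := by
        have := hqsup b (by simp [SimpleGraph.Walk.support_cons]; right; exact hbsup)
        rcases this with h1 | h1
        · exact absurd h1 hadjb.ne'
        · exact h1
      exact hab (hN ⟨hat, h⟩ ⟨hbt, hadjb⟩)
  · refine ht p hp (fun u hu => ?_)
    rcases hsup u hu with h1 | h1
    · exact absurd (h1 ▸ hu) hx
    · exact h1

lemma noCycIn_isAcyclic {V : Type*} {G : SimpleGraph V} {t : Set V} (h : NoCycIn G t) :
    (G.induce t).IsAcyclic := by
  intro v p hp
  have hinj : Function.Injective (SimpleGraph.Embedding.induce t (G := G)).toHom := by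
    exact Subtype.val_injective
  have hc : (p.map (SimpleGraph.Embedding.induce t (G := G)).toHom).IsCycle :=
    (SimpleGraph.Walk.map_isCycle_iff_of_injective hinj).mpr hp
  refine h _ hc (fun u hu => ?_)
  rw [SimpleGraph.Walk.support_map, List.mem_map] at hu
  obtain ⟨w, _, rfl⟩ := hu
  exact w.2

open Classical in
/-- The finset of `L`-colorings that are "cycle-free on `s`" colorwise. -/
noncomputable def ACol {V α : Type*} [Fintype V] (G : SimpleGraph V) (L : V → Finset α)
    (s : Finset V) : Finset (V → α) :=
  (Fintype.piFinset L).filter (fun f => ∀ c : α, NoCycIn G {v | v ∈ s ∧ f v = c})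

lemma mem_ACol {V α : Type*} [Fintype V] {G : SimpleGraph V} {L : V → Finset α}
    {s : Finset V} {f : V → α} :
    f ∈ ACol G L s ↔ (∀ x, f x ∈ L x) ∧ ∀ c : α, NoCycIn G {v | v ∈ s ∧ f v = c} := by
  classical
  simp [ACol, Fintype.mem_piFinset]

lemma ACol_mono {V α : Type*} [Fintype V] {G : SimpleGraph V} {L : V → Finset α}
    {s₀ s : Finset V} (h : s₀ ⊆ s) : ACol G L s ⊆ ACol G L s₀ := by
  intro f hf
  rw [mem_ACol] at hf ⊢
  refine ⟨hf.1, fun c => noCycIn_mono ?_ (hf.2 c)⟩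
  intro v hv
  exact ⟨h hv.1, hv.2⟩

lemma ACol_update_mem {V α : Type*} [Fintype V] [DecidableEq V] {G : SimpleGraph V} {L : V → Finset α}
    {s₀ : Finset V} {x : V} (hx : x ∉ s₀) {f : V → α} (hf : f ∈ ACol G L s₀)
    {c : α} (hc : c ∈ L x) : Function.update f x c ∈ ACol G L s₀ := by
  classical
  rw [mem_ACol] at hf ⊢
  constructor
  · intro y
    by_cases hy : y = x
    · subst hy; simpa using hc
    · rw [Function.update_of_ne hy]; exact hf.1 y
  · intro c'
    have hset : {v | v ∈ s₀ ∧ Function.update f x c v = c'} = {v | v ∈ s₀ ∧ f v = c'} := by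
      ext v
      have : v ∈ s₀ → v ≠ x := fun hv hvx => hx (hvx ▸ hv)
      constructor
      · rintro ⟨hv, he⟩; rw [Function.update_of_ne (this hv)] at he; exact ⟨hv, he⟩
      · rintro ⟨hv, he⟩; exact ⟨hv, by rw [Function.update_of_ne (this hv)]; exact he⟩
    rw [hset]
    exact hf.2 c'

open Classical in
/-- At least two colors of `L x` extend an arboreal coloring of `s.erase x`. -/
lemma two_le_good {V α : Type*} [Fintype V] [DecidableEq V] {G : SimpleGraph V} {L : V → Finset α}
    (hL : ∀ y, (L y).card = 3) {s : Finset V} {x : V} (hxs : x ∈ s)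
    (hN3 : {y | y ∈ (s : Set V) ∧ G.Adj x y}.ncard ≤ 3)
    {f : V → α} (hf : f ∈ ACol G L (s.erase x)) :
    2 ≤ ((L x).filter (fun c => Function.update f x c ∈ ACol G L s)).card := by
  classical
  rw [mem_ACol] at hf
  -- for a "bad" color, x has two distinct neighbors in s.erase x of that color
  have key : ∀ c ∈ L x, Function.update f x c ∉ ACol G L s →
      ∃ y₁ y₂, y₁ ≠ y₂ ∧ (y₁ ∈ s.erase x ∧ G.Adj x y₁ ∧ f y₁ = c)
        ∧ (y₂ ∈ s.erase x ∧ G.Adj x y₂ ∧ f y₂ = c) := by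
    intro c hc hbad
    rw [mem_ACol] at hbad
    push_neg at hbad
    have hmem : ∀ y, Function.update f x c y ∈ L y := by
      intro y
      by_cases hy : y = x
      · subst hy; simpa using hc
      · rw [Function.update_of_ne hy]; exact hf.1 y
    obtain ⟨c', hc'⟩ := hbad hmem
    -- c' must be c
    have hcc : c' = c := by
      by_contra hne
      apply hc'
      have hset : {v | v ∈ s ∧ Function.update f x c v = c'}
          = {v | v ∈ s.erase x ∧ f v = c'} := by
        ext v
        constructor
        · rintro ⟨hv, he⟩
          have hvx : v ≠ x := by
            rintro rfl; rw [Function.update_self] at he; exact hne he.symm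
          rw [Function.update_of_ne hvx] at he
          exact ⟨Finset.mem_erase.mpr ⟨hvx, hv⟩, he⟩
        · rintro ⟨hv, he⟩
          have hvx : v ≠ x := (Finset.mem_erase.mp hv).1
          exact ⟨(Finset.mem_erase.mp hv).2, by rw [Function.update_of_ne hvx]; exact he⟩
      rw [hset]
      exact hf.2 c'
    subst hcc
    -- the class of c' equals insert x (class₀ c')
    have hset : {v | v ∈ s ∧ Function.update f x c' v = c'}
        = insert x {v | v ∈ s.erase x ∧ f v = c'} := by
      ext v
      by_cases hvx : v = x
      · subst hvx
        simp [Function.update_self, hxs]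
      · simp only [Set.mem_setOf_eq]
        rw [Function.update_of_ne hvx]
        simp only [Set.mem_insert_iff, hvx, Finset.mem_erase, Set.mem_setOf_eq, false_or]
        tauto
    rw [hset] at hc'
    have hsub : ¬ ({y | y ∈ {v | v ∈ s.erase x ∧ f v = c'} ∧ G.Adj x y}).Subsingleton := by
      intro hsing
      exact hc' (noCycIn_insert (hf.2 c') hsing)
    rw [Set.not_subsingleton_iff] at hsub
    obtain ⟨y₁, hy₁, y₂, hy₂, hne⟩ := hsub
    exact ⟨y₁, y₂, hne, ⟨hy₁.1.1, hy₁.2, hy₁.1.2⟩, ⟨hy₂.1.1, hy₂.2, hy₂.1.2⟩⟩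
  -- at most one bad color
  have hbad : ((L x).filter (fun c => Function.update f x c ∉ ACol G L s)).card ≤ 1 := by
    rw [Finset.card_le_one]
    intro c₁ h₁ c₂ h₂
    by_contra hne
    rw [Finset.mem_filter] at h₁ h₂
    obtain ⟨y₁, y₂, hy, hy₁, hy₂⟩ := key c₁ h₁.1 h₁.2
    obtain ⟨z₁, z₂, hz, hz₁, hz₂⟩ := key c₂ h₂.1 h₂.2
    have hyz : ∀ (a b : V), (a ∈ s.erase x ∧ G.Adj x a ∧ f a = c₁) →
        (b ∈ s.erase x ∧ G.Adj x b ∧ f b = c₂) → a ≠ b := by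
      rintro a b ⟨_, _, ha⟩ ⟨_, _, hb⟩ rfl
      exact hne (ha ▸ hb ▸ rfl)
    have hsub4 : (({y₁, y₂, z₁, z₂} : Finset V) : Set V) ⊆ {y | y ∈ (s : Set V) ∧ G.Adj x y} := by
      intro u hu
      simp only [Finset.coe_insert, Finset.coe_singleton, Set.mem_insert_iff,
        Set.mem_singleton_iff] at hu
      rcases hu with rfl | rfl | rfl | rfl
      · exact ⟨Finset.mem_of_mem_erase hy₁.1, hy₁.2.1⟩
      · exact ⟨Finset.mem_of_mem_erase hy₂.1, hy₂.2.1⟩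
      · exact ⟨Finset.mem_of_mem_erase hz₁.1, hz₁.2.1⟩
      · exact ⟨Finset.mem_of_mem_erase hz₂.1, hz₂.2.1⟩
    have hcard4 : ({y₁, y₂, z₁, z₂} : Finset V).card = 4 := by
      have h13 := hyz y₁ z₁ hy₁ hz₁
      have h14 := hyz y₁ z₂ hy₁ hz₂
      have h23 := hyz y₂ z₁ hy₂ hz₁
      have h24 := hyz y₂ z₂ hy₂ hz₂
      simp [Finset.card_insert_of_notMem, Finset.mem_insert, Finset.mem_singleton,
        hy, h13, h14, h23, h24, hz]
    have : 4 ≤ ({y | y ∈ (s : Set V) ∧ G.Adj x y}).ncard := by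
      calc 4 = (({y₁, y₂, z₁, z₂} : Finset V) : Set V).ncard := by
              rw [Set.ncard_coe_finset, hcard4]
        _ ≤ _ := Set.ncard_le_ncard hsub4 (Set.toFinite _)
    omega
  have hsplit := Finset.card_filter_add_card_filter_not
    (s := L x) (p := fun c => Function.update f x c ∈ ACol G L s)
  have hLx := hL x
  omega

/-- The key counting step. -/
lemma step_count {V α : Type*} [Fintype V] [DecidableEq V] {G : SimpleGraph V} {L : V → Finset α}
    (hL : ∀ y, (L y).card = 3) {s : Finset V} {x : V} (hxs : x ∈ s)
    (hN3 : {y | y ∈ (s : Set V) ∧ G.Adj x y}.ncard ≤ 3) :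
    2 * (ACol G L (s.erase x)).card ≤ 3 * (ACol G L s).card := by
  classical
  set s₀ := s.erase x with hs₀
  set B := ACol G L s₀ with hB
  set A := ACol G L s with hA
  have hAB : A ⊆ B := ACol_mono (Finset.erase_subset x s)
  have hxs₀ : x ∉ s₀ := Finset.notMem_erase x s
  obtain ⟨c₀, hc₀⟩ : (L x).Nonempty := Finset.card_pos.mp (by rw [hL x]; norm_num)
  set g : (V → α) → (V → α) := fun f => Function.update f x c₀ with hg
  set T := B.image g with hT
  -- B fibers have size exactly 3
  have hBfiber : ∀ h ∈ T, (B.filter (fun f => g f = h)).card = 3 := by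
    intro h hh
    rw [Finset.mem_image] at hh
    obtain ⟨f₀, hf₀, rfl⟩ := hh
    have heq : B.filter (fun f => g f = g f₀) = (L x).image (fun c => Function.update f₀ x c) := by
      ext f
      rw [Finset.mem_filter, Finset.mem_image]
      constructor
      · rintro ⟨hfB, hfg⟩
        refine ⟨f x, (mem_ACol.mp hfB).1 x, ?_⟩
        funext y
        by_cases hy : y = x
        · subst hy; simp
        · have := congrFun hfg y
          simp only [hg, Function.update_of_ne hy] at this
          rw [Function.update_of_ne hy, this]
      · rintro ⟨c, hc, rfl⟩
        refine ⟨ACol_update_mem hxs₀ hf₀ hc, ?_⟩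
        simp [hg, Function.update_idem]
    rw [heq, Finset.card_image_of_injective _ (fun a b hab => by
      have := congrFun hab x; simpa using this), hL x]
  -- A fibers over T have size at least 2
  have hAfiber : ∀ h ∈ T, 2 ≤ (A.filter (fun f => g f = h)).card := by
    intro h hh
    rw [Finset.mem_image] at hh
    obtain ⟨f₀, hf₀, rfl⟩ := hh
    have hgood := two_le_good hL hxs hN3 (f := f₀) hf₀
    refine le_trans hgood (Finset.card_le_card_of_injOn
      (fun c => Function.update f₀ x c) ?_ ?_)
    · intro c hc
      rw [Finset.mem_coe, Finset.mem_filter] at hc ⊢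
      refine ⟨hc.2, ?_⟩
      simp [hg, Function.update_idem]
    · intro a _ b _ hab
      have := congrFun hab x; simpa using this
  have hBcard : B.card = 3 * T.card := by
    rw [Finset.card_eq_sum_card_fiberwise (f := g) (t := T)
      (fun f hf => Finset.mem_image_of_mem g hf)]
    rw [Finset.sum_congr rfl hBfiber, Finset.sum_const, smul_eq_mul, mul_comm]
  have hAcard : 2 * T.card ≤ A.card := by
    rw [Finset.card_eq_sum_card_fiberwise (f := g) (t := T)
      (fun f hf => Finset.mem_image_of_mem g (hAB hf))]
    calc 2 * T.card = ∑ _h ∈ T, 2 := by rw [Finset.sum_const, smul_eq_mul, mul_comm]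
      _ ≤ _ := Finset.sum_le_sum hAfiber
  calc 2 * B.card = 3 * (2 * T.card) := by rw [hBcard]; ring
    _ ≤ 3 * A.card := by omega

lemma ACol_card_lower {V α : Type*} [Fintype V] {G : SimpleGraph V}
    (hdegen : ∀ s : Set V, s.Nonempty → ∃ x ∈ s, {y | y ∈ s ∧ G.Adj x y}.ncard ≤ 3)
    {L : V → Finset α} (hL : ∀ y, (L y).card = 3) (s : Finset V) :
    2 ^ s.card * 3 ^ (Fintype.card V - s.card) ≤ (ACol G L s).card := by
  classical
  induction s using Finset.strongInduction with
  | _ s ih =>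
    rcases s.eq_empty_or_nonempty with rfl | hne
    · have hA : ACol G L (∅ : Finset V) = Fintype.piFinset L := by
        apply Finset.filter_true_of_mem
        intro f _ c
        have : {v | v ∈ (∅ : Finset V) ∧ f v = c} = (∅ : Set V) := by
          ext v; simp
        rw [this]
        exact noCycIn_empty G
      rw [hA, Fintype.card_piFinset]
      simp only [Finset.card_empty, pow_zero, one_mul, Nat.sub_zero]
      calc (3 : ℕ) ^ Fintype.card V = ∏ _x : V, 3 := by
            rw [Finset.prod_const, Finset.card_univ]
        _ ≤ _ := by
            apply le_of_eq
            exact Finset.prod_congr rfl (fun y _ => (hL y).symm)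
    · obtain ⟨x, hxs, hN3⟩ := hdegen (s : Set V) (by exact_mod_cast hne)
      have hxs' : x ∈ s := hxs
      have hstep := step_count hL hxs' hN3 (L := L)
      have hih := ih (s.erase x) (Finset.erase_ssubset hxs')
      have hcard : (s.erase x).card = s.card - 1 := Finset.card_erase_of_mem hxs'
      have h1 : 1 ≤ s.card := Finset.card_pos.mpr hne
      have hns : s.card ≤ Fintype.card V := by
        rw [← Finset.card_univ]; exact Finset.card_le_univ s
      -- arithmetic
      have key : 3 * (2 ^ s.card * 3 ^ (Fintype.card V - s.card))
          = 2 * (2 ^ (s.card - 1) * 3 ^ (Fintype.card V - (s.card - 1))) := by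
        have h2 : 2 ^ s.card = 2 * 2 ^ (s.card - 1) := by
          conv_lhs => rw [show s.card = (s.card - 1) + 1 by omega]
          ring
        have h3 : 3 ^ (Fintype.card V - (s.card - 1)) = 3 * 3 ^ (Fintype.card V - s.card) := by
          rw [show Fintype.card V - (s.card - 1) = (Fintype.card V - s.card) + 1 by omega]
          ring
        rw [h2, h3]; ring
      rw [hcard] at hih
      have : 3 * (2 ^ s.card * 3 ^ (Fintype.card V - s.card)) ≤ 3 * (ACol G L s).card := by
        rw [key]
        calc 2 * (2 ^ (s.card - 1) * 3 ^ (Fintype.card V - (s.card - 1)))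
            ≤ 2 * (ACol G L (s.erase x)).card := by omega
          _ ≤ 3 * (ACol G L s).card := hstep
      omega

theorem stmt_11 {V α : Type*} [Fintype V] (G : SimpleGraph V)
    -- every nonempty induced subgraph has a vertex of degree at most 3 in it
    (hdegen : ∀ s : Set V, s.Nonempty → ∃ x ∈ s, {y | y ∈ s ∧ G.Adj x y}.ncard ≤ 3)
    (L : V → Finset α) (hL : ∀ x, (L x).card = 3) :
    2 ^ Fintype.card V ≤
      {f : V → α | (∀ x, f x ∈ L x) ∧ ArbColOn G Set.univ f}.ncard := by
  classical
  have hmain := ACol_card_lower hdegen hL (Finset.univ : Finset V)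
  have hsub : (↑(ACol G L Finset.univ) : Set (V → α)) ⊆
      {f : V → α | (∀ x, f x ∈ L x) ∧ ArbColOn G Set.univ f} := by
    intro f hf
    rw [Finset.mem_coe, mem_ACol] at hf
    refine ⟨hf.1, fun c => ?_⟩
    have hset : {v | v ∈ Set.univ ∧ f v = c}
        = {v | v ∈ (Finset.univ : Finset V) ∧ f v = c} := by
      ext v; simp
    rw [hset]
    exact noCycIn_isAcyclic (hf.2 c)
  have hfin : {f : V → α | (∀ x, f x ∈ L x) ∧ ArbColOn G Set.univ f}.Finite := by
    apply Set.Finite.subset (Fintype.piFinset L).finite_toSet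
    intro f hf
    simp only [Finset.mem_coe, Fintype.mem_piFinset]
    exact hf.1
  calc 2 ^ Fintype.card V
      = 2 ^ (Finset.univ : Finset V).card
        * 3 ^ (Fintype.card V - (Finset.univ : Finset V).card) := by
        rw [Finset.card_univ]; simp
    _ ≤ (ACol G L Finset.univ).card := hmain
    _ = (↑(ACol G L Finset.univ) : Set (V → α)).ncard := (Set.ncard_coe_finset _).symm
    _ ≤ _ := Set.ncard_le_ncard hsub hfin
end
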